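/- arXiv:math/0608713 — 10 statements merged into one kernel-verified Lean document; each statement's English description precedes it below -/
import Mathlib

section
/- Let δ ∈ [0,1]. Under Assumption (A), for any prior probability measure π on ℋ, the probability over X ~ P that there exists h ∈ ℋ with X ∈ B(h, δ·π({h})) is at most δ. -/
open MeasureTheory
open scoped ENNReal

namespace OccamAux

variable {H : Type*} [MeasurableSpace H]

/-- Two points are equivalent if no measurable set separates them. -/
def rel (h h' : H) : Prop := ∀ M : Set H, MeasurableSet M → (h ∈ M ↔ h' ∈ M)

def relSetoid (H : Type*) [MeasurableSpace H] : Setoid H :=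
  ⟨rel, ⟨fun _ _ _ => Iff.rfl, fun hr M hM => (hr M hM).symm,
    fun h1 h2 M hM => (h1 M hM).trans (h2 M hM)⟩⟩

lemma prod_section_invariant {α : Type*} [MeasurableSpace α] {h h' : H}
    (hr : rel h h') {E : Set (H × α)} (hE : MeasurableSet E) (t : α) :
    (h, t) ∈ E ↔ (h', t) ∈ E := by
  let m' : MeasurableSpace (H × α) :=
    { MeasurableSet' := fun S => ∀ t, ((h, t) ∈ S ↔ (h', t) ∈ S)
      measurableSet_empty := fun _ => Iff.rfl
      measurableSet_compl := fun S hS t => not_congr (hS t)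
      measurableSet_iUnion := fun f hf t => by
        simp only [Set.mem_iUnion]; exact exists_congr fun i => hf i t }
  have hle : (Prod.instMeasurableSpace : MeasurableSpace (H × α)) ≤ m' := by
    refine sup_le ?_ ?_
    · rintro S ⟨M, hM, rfl⟩ t; exact hr M hM
    · rintro S ⟨C, hC, rfl⟩ t; exact Iff.rfl
  exact hle E hE t

lemma meas_singleton_eq (π : Measure H) {h h' : H} (hr : rel h h') :
    π {h} = π {h'} := by
  rw [measure_eq_iInf, measure_eq_iInf]
  refine le_antisymm ?_ ?_
  · refine le_iInf fun t => le_iInf fun h1 => le_iInf fun h2 => ?_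
    refine iInf_le_of_le t (iInf_le_of_le ?_ (iInf_le _ h2))
    exact Set.singleton_subset_iff.mpr
      ((hr t h2).mpr (Set.singleton_subset_iff.mp h1))
  · refine le_iInf fun t => le_iInf fun h1 => le_iInf fun h2 => ?_
    refine iInf_le_of_le t (iInf_le_of_le ?_ (iInf_le _ h2))
    exact Set.singleton_subset_iff.mpr
      ((hr t h2).mp (Set.singleton_subset_iff.mp h1))

lemma exists_sep {h h' : H} (hnr : ¬ rel h h') :
    ∃ M : Set H, MeasurableSet M ∧ h ∈ M ∧ h' ∉ M := by
  simp only [rel, not_forall] at hnr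
  obtain ⟨M, hM, hiff⟩ := hnr
  by_cases hm : h ∈ M
  · refine ⟨M, hM, hm, fun h'm => hiff (iff_of_true hm h'm)⟩
  · have h'm : h' ∈ M := by
      by_contra h'm
      exact hiff (iff_of_false hm h'm)
    exact ⟨Mᶜ, hM.compl, hm, fun c => c h'm⟩

open Classical in
/-- A separating measurable set, when one exists. -/
noncomputable def sep (h h' : H) : Set H :=
  if hc : ∃ M : Set H, MeasurableSet M ∧ h ∈ M ∧ h' ∉ M then hc.choose else Set.univ

lemma sep_spec {h h' : H} (hnr : ¬ rel h h') :
    MeasurableSet (sep h h') ∧ h ∈ sep h h' ∧ h' ∉ sep h h' := by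
  rw [sep, dif_pos (exists_sep hnr)]
  exact (exists_sep hnr).choose_spec

lemma finset_sum_le_one (π : Measure H) [IsProbabilityMeasure π]
    (s : Finset H) (hs : ∀ h ∈ s, ∀ h' ∈ s, h ≠ h' → ¬ rel h h') :
    ∑ h ∈ s, π {h} ≤ 1 := by
  classical
  set D : H → Set H := fun h => ⋂ h' ∈ s.erase h, (sep h h' ∩ (sep h' h)ᶜ) with hD
  have hDmeas : ∀ h ∈ s, MeasurableSet (D h) := by
    intro h hh
    refine Finset.measurableSet_biInter _ fun h' hh' => ?_
    have h1 := hs h hh h' (Finset.mem_of_mem_erase hh') (Finset.ne_of_mem_erase hh').symm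
    have h2 := hs h' (Finset.mem_of_mem_erase hh') h hh (Finset.ne_of_mem_erase hh')
    exact (sep_spec h1).1.inter (sep_spec h2).1.compl
  have hDmem : ∀ h ∈ s, h ∈ D h := by
    intro h hh
    refine Set.mem_iInter₂.mpr fun h' hh' => ?_
    have h1 := hs h hh h' (Finset.mem_of_mem_erase hh') (Finset.ne_of_mem_erase hh').symm
    have h2 := hs h' (Finset.mem_of_mem_erase hh') h hh (Finset.ne_of_mem_erase hh')
    exact ⟨(sep_spec h1).2.1, (sep_spec h2).2.2⟩
  have hDdisj : (↑s : Set H).PairwiseDisjoint D := by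
    intro h hh h' hh' hne
    refine Set.disjoint_left.mpr fun a ha ha' => ?_
    have h1 : a ∈ sep h h' ∩ (sep h' h)ᶜ :=
      Set.mem_iInter₂.mp ha h' (Finset.mem_erase.mpr ⟨hne.symm, hh'⟩)
    have h2 : a ∈ sep h' h ∩ (sep h h')ᶜ :=
      Set.mem_iInter₂.mp ha' h (Finset.mem_erase.mpr ⟨hne, hh⟩)
    exact h1.2 h2.1
  calc ∑ h ∈ s, π {h} ≤ ∑ h ∈ s, π (D h) := by
        refine Finset.sum_le_sum fun h hh => ?_
        exact measure_mono (Set.singleton_subset_iff.mpr (hDmem h hh))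
    _ = π (⋃ h ∈ s, D h) := (measure_biUnion_finset hDdisj hDmeas).symm
    _ ≤ 1 := prob_le_one

end OccamAux

open OccamAux in
/-- **Abstract Occam's razor** (first part).
Under Assumption (A) — bad events `B h t` of probability at most `t` for `t ∈ [0,1]`,
jointly measurable, with `B h 0 = ∅` — for any prior probability measure `π` on the pool `H`
and any `δ ∈ [0,1]`, the probability over `X ~ P` that there exists `h ∈ H` with
`X ∈ B(h, δ·π({h}))` is at most `δ`. -/
theorem abstract_occam_razor_exists
    {𝒳 : Type*} [MeasurableSpace 𝒳] {H : Type*} [MeasurableSpace H]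
    (P : Measure 𝒳) [IsProbabilityMeasure P]
    (B : H → ℝ → Set 𝒳)
    (hBprob : ∀ (h : H) (t : ℝ), 0 ≤ t → t ≤ 1 → P (B h t) ≤ ENNReal.ofReal t)
    (hBmeas : MeasurableSet {p : 𝒳 × H × ℝ | p.1 ∈ B p.2.1 p.2.2})
    (hB0 : ∀ h : H, B h 0 = ∅)
    (δ : ℝ) (hδ0 : 0 ≤ δ) (hδ1 : δ ≤ 1)
    (π : Measure H) [IsProbabilityMeasure π] :
    P {x : 𝒳 | ∃ h : H, x ∈ B h (δ * (π {h}).toReal)} ≤ ENNReal.ofReal δ := by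
  classical
  -- B depends on h only through its measurable-atom equivalence class
  have hBinv : ∀ {h h' : H}, rel h h' → ∀ t : ℝ, B h t = B h' t := by
    intro h h' hr t
    ext x
    have hE : MeasurableSet ((fun q : H × ℝ => (x, q)) ⁻¹'
        {p : 𝒳 × H × ℝ | p.1 ∈ B p.2.1 p.2.2}) :=
      measurable_prodMk_left hBmeas
    exact prod_section_invariant hr hE t
  letI sQ : Setoid H := relSetoid H
  let Q := Quotient sQ
  let ν : Q → ℝ≥0∞ := fun q => π {q.out}
  -- total mass of atoms is at most 1
  have htsum : ∑' q : Q, ν q ≤ 1 := by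
    refine Summable.tsum_le_of_sum_le ENNReal.summable fun t => ?_
    have hinj : Set.InjOn Quotient.out (↑t : Set Q) := fun a _ b _ hab => by
      rw [← Quotient.out_eq a, ← Quotient.out_eq b, hab]
    have himg : ∑ h ∈ t.image Quotient.out, π {h} = ∑ q ∈ t, π {q.out} :=
      Finset.sum_image (fun a ha b hb hab => hinj ha hb hab)
    rw [show ∑ q ∈ t, ν q = ∑ q ∈ t, π {q.out} from rfl, ← himg]
    refine finset_sum_le_one π _ fun h hh h' hh' hne hr => ?_
    obtain ⟨q, _, rfl⟩ := Finset.mem_image.mp hh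
    obtain ⟨q', _, rfl⟩ := Finset.mem_image.mp hh'
    exact hne (by rw [← Quotient.out_eq q, ← Quotient.out_eq q', Quotient.sound hr])
  have hTcount : (Function.support ν).Countable :=
    Summable.countable_support_ennreal (lt_of_le_of_lt htsum (by norm_num)).ne
  -- the bad set is covered by bad events of representatives of heavy atoms
  have hsub : {x : 𝒳 | ∃ h : H, x ∈ B h (δ * (π {h}).toReal)} ⊆
      ⋃ q ∈ Function.support ν, B q.out (δ * (ν q).toReal) := by
    rintro x ⟨h, hx⟩
    have hr : rel (⟦h⟧ : Q).out h := Quotient.mk_out h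
    have hπ : ν ⟦h⟧ = π {h} := meas_singleton_eq π hr
    by_cases h0 : π {h} = 0
    · rw [h0] at hx
      simp only [ENNReal.toReal_zero, mul_zero, hB0 h] at hx
      exact absurd hx (Set.notMem_empty x)
    · refine Set.mem_biUnion (show ν ⟦h⟧ ≠ 0 by rw [hπ]; exact h0) ?_
      rw [hπ, hBinv hr]
      exact hx
  -- union bound
  have hle1 : ∀ q : Q, (ν q).toReal ≤ 1 := fun q => by
    have := ENNReal.toReal_mono (by norm_num) (prob_le_one (μ := π) (s := {q.out}))
    simpa using this
  calc P {x : 𝒳 | ∃ h : H, x ∈ B h (δ * (π {h}).toReal)}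
      ≤ P (⋃ q ∈ Function.support ν, B q.out (δ * (ν q).toReal)) := measure_mono hsub
    _ ≤ ∑' q : (Function.support ν), P (B (↑q : Q).out (δ * (ν ↑q).toReal)) :=
        measure_biUnion_le P hTcount _
    _ ≤ ∑' q : (Function.support ν), ENNReal.ofReal δ * ν ↑q := by
        refine ENNReal.tsum_le_tsum fun q => ?_
        refine le_trans (hBprob _ _ (mul_nonneg hδ0 ENNReal.toReal_nonneg)
          (mul_le_one₀ hδ1 ENNReal.toReal_nonneg (hle1 ↑q))) ?_
        rw [ENNReal.ofReal_mul hδ0, ENNReal.ofReal_toReal (measure_ne_top π _)]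
    _ = ENNReal.ofReal δ * ∑' q : (Function.support ν), ν ↑q := ENNReal.tsum_mul_left
    _ ≤ ENNReal.ofReal δ * 1 := by
        refine mul_le_mul_right (le_trans ?_ htsum) _
        exact ENNReal.tsum_comp_le_tsum_of_injective Subtype.val_injective ν
    _ = ENNReal.ofReal δ := mul_one _
end

section
/- Let δ ∈ [0,1]. Under Assumption (A), for any prior probability measure π on ℋ and any algorithm taking X as input and returning h_X ∈ ℋ (measurably as a function of X), the probability over X ~ P that X ∈ B(h_X, δ·π({h_X})) is at most δ. -/
open MeasureTheory

section Aux

variable {H : Type*} [MeasurableSpace H]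

/-- Two points of `H` are measurably indistinguishable if they belong to exactly the same
measurable sets. -/
def MRel (h h' : H) : Prop := ∀ s : Set H, MeasurableSet s → (h ∈ s ↔ h' ∈ s)

lemma MRel.rfl {h : H} : MRel h h := fun _ _ => Iff.rfl

lemma MRel.symm {h h' : H} (hr : MRel h h') : MRel h' h := fun s hs => (hr s hs).symm

lemma exists_sep {a b : H} (h : ¬ MRel a b) : ∃ s, MeasurableSet s ∧ a ∈ s ∧ b ∉ s := by
  simp only [MRel, not_forall] at h
  obtain ⟨s, hs, hiff⟩ := h
  by_cases ha : a ∈ s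
  · exact ⟨s, hs, ha, fun hb => hiff ⟨fun _ => hb, fun _ => ha⟩⟩
  · exact ⟨sᶜ, hs.compl, ha, fun hb =>
      hiff ⟨fun ha' => absurd ha' ha, fun hb' => absurd hb' hb⟩⟩

lemma MRel.meas_eq {h h' : H} (hr : MRel h h') (π : Measure H) : π {h} = π {h'} := by
  have key : ∀ a b : H, MRel a b → π {a} ≤ π {b} := by
    intro a b hab
    rw [measure_eq_iInf (s := ({b} : Set H))]
    refine le_iInf fun t => le_iInf fun hbt => le_iInf fun htm => ?_
    refine measure_mono ?_
    intro z hz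
    rcases hz with rfl
    exact (hab t htm).mpr (hbt (Set.mem_singleton b))
  exact le_antisymm (key h h' hr) (key h' h hr.symm)

/-- Countable subadditivity bound: a countable family of pairwise measurably-distinguishable
points has total singleton measure at most the total mass. -/
lemma sum_singleton_le (π : Measure H) (D : Set H) (hD : D.Countable)
    (hpair : D.Pairwise fun d d' => ¬ MRel d d') :
    ∑' d : D, π {(d : H)} ≤ π Set.univ := by
  classical
  have hchoice : ∀ a b : H, ∃ s : Set H, MeasurableSet s ∧ (¬ MRel a b → a ∈ s ∧ b ∉ s) := by
    intro a b
    by_cases h : MRel a b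
    · exact ⟨∅, MeasurableSet.empty, fun h' => absurd h h'⟩
    · obtain ⟨s, h1, h2, h3⟩ := exists_sep h
      exact ⟨s, h1, fun _ => ⟨h2, h3⟩⟩
  choose s hsm hsep using hchoice
  set t : H → H → Set H := fun a b => s a b ∩ (s b a)ᶜ with ht
  set A : H → Set H := fun d => ⋂ d' ∈ D \ {d}, t d d' with hA
  have hAmeas : ∀ d, MeasurableSet (A d) := by
    intro d
    exact MeasurableSet.biInter (hD.mono Set.diff_subset)
      (fun b _ => (hsm d b).inter (hsm b d).compl)
  have hmem : ∀ d ∈ D, d ∈ A d := by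
    intro d hd
    refine Set.mem_biInter fun d' hd' => ?_
    obtain ⟨hd'D, hne⟩ := hd'
    have hne' : d ≠ d' := fun h => hne (h ▸ rfl)
    have h1 := hsep d d' (hpair hd hd'D hne')
    have h2 := hsep d' d (hpair hd'D hd (Ne.symm hne'))
    exact ⟨h1.1, h2.2⟩
  have hdisj : D.PairwiseDisjoint A := by
    intro a ha b hb hab
    refine Set.disjoint_left.mpr fun z hza hzb => ?_
    have h1 : z ∈ t a b := by
      have hmem' : b ∈ D \ {a} := ⟨hb, fun h => hab (Set.mem_singleton_iff.mp h).symm⟩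
      exact Set.mem_iInter₂.mp hza b hmem'
    have h2 : z ∈ t b a := by
      have hmem' : a ∈ D \ {b} := ⟨ha, fun h => hab (Set.mem_singleton_iff.mp h)⟩
      exact Set.mem_iInter₂.mp hzb a hmem'
    exact h2.2 h1.1
  calc ∑' d : D, π {(d : H)} ≤ ∑' d : D, π (A d) := by
        refine ENNReal.tsum_le_tsum fun d => measure_mono ?_
        intro z hz; rcases hz with rfl; exact hmem _ d.2
    _ = π (⋃ d ∈ D, A d) := (measure_biUnion hD hdisj fun d _ => hAmeas d).symm
    _ ≤ π Set.univ := measure_mono (Set.subset_univ _)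

/-- There is a countable set of representatives for the measurably-indistinguishable classes
of positive singleton measure. -/
lemma exists_reps (π : Measure H) [IsProbabilityMeasure π] :
    ∃ D : Set H, D.Countable ∧ (D.Pairwise fun d d' => ¬ MRel d d') ∧
      ∀ h : H, π {h} ≠ 0 → ∃ d ∈ D, MRel h d := by
  classical
  set T : Set H := {h | π {h} ≠ 0} with hT
  set S : Set (Set H) := {D | D ⊆ T ∧ D.Pairwise fun d d' => ¬ MRel d d'} with hS
  have hchain : ∀ c ⊆ S, IsChain (· ⊆ ·) c → ∃ ub ∈ S, ∀ s ∈ c, s ⊆ ub := by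
    intro c hc hchain
    refine ⟨⋃₀ c, ⟨?_, ?_⟩, fun sSet hs => Set.subset_sUnion_of_mem hs⟩
    · exact Set.sUnion_subset fun sSet hs => (hc hs).1
    · intro a ha b hb hab
      obtain ⟨s1, hs1, has1⟩ := ha
      obtain ⟨s2, hs2, hbs2⟩ := hb
      rcases hchain.total hs1 hs2 with h | h
      · exact (hc hs2).2 (h has1) hbs2 hab
      · exact (hc hs1).2 has1 (h hbs2) hab
  obtain ⟨m, hm⟩ := zorn_subset S hchain
  obtain ⟨⟨hmT, hmpair⟩, hmmax⟩ := hm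
  have hcover : ∀ h : H, π {h} ≠ 0 → ∃ d ∈ m, MRel h d := by
    intro h hh
    by_contra hno
    push_neg at hno
    have hmem : insert h m ∈ S := by
      constructor
      · exact Set.insert_subset hh hmT
      · intro a ha b hb hab
        rcases ha with rfl | ha
        · rcases hb with rfl | hb
          · exact absurd rfl hab
          · exact hno b hb
        · rcases hb with rfl | hb
          · exact fun hr => hno a ha hr.symm
          · exact hmpair ha hb hab
    have : insert h m ⊆ m := hmmax hmem (Set.subset_insert h m)
    exact hno h (this (Set.mem_insert h m)) MRel.rfl
  refine ⟨m, ?_, hmpair, hcover⟩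
  -- countability of m
  have hsub : m ⊆ ⋃ n : ℕ, {d ∈ m | ((n : ENNReal))⁻¹ ≤ π {d}} := by
    intro d hd
    have hd0 : π {d} ≠ 0 := hmT hd
    obtain ⟨n, hn⟩ := ENNReal.exists_inv_nat_lt hd0
    exact Set.mem_iUnion.mpr ⟨n, hd, hn.le⟩
  refine Set.Countable.mono hsub (Set.countable_iUnion fun n => Set.Finite.countable ?_)
  by_contra hinf
  rw [← Set.not_infinite, not_not] at hinf
  obtain ⟨F, hFsub, hFcard⟩ := hinf.exists_subset_card_eq (n + 1)
  have hFT : (F : Set H) ⊆ m := fun d hd => (hFsub hd).1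
  have hsum := sum_singleton_le π (F : Set H) F.countable_toSet
    (hmpair.mono hFT)
  have hle : ∀ d : (F : Set H), ((n : ENNReal))⁻¹ ≤ π {(d : H)} := fun d => (hFsub d.2).2
  have hlow : (F.card : ENNReal) * ((n : ENNReal))⁻¹ ≤ ∑' d : (F : Set H), π {(d : H)} := by
    calc (F.card : ENNReal) * ((n : ENNReal))⁻¹
        = ∑' _d : (F : Set H), ((n : ENNReal))⁻¹ := by
          rw [tsum_fintype]
          simp [Finset.sum_const, Fintype.card_coe]
      _ ≤ _ := ENNReal.tsum_le_tsum hle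
  have h1 : (F.card : ENNReal) * ((n : ENNReal))⁻¹ ≤ 1 := by
    refine hlow.trans (hsum.trans ?_)
    simp
  rcases Nat.eq_zero_or_pos n with rfl | hn
  · simp [hFcard] at h1
  · have hn0 : (n : ENNReal) ≠ 0 := by exact_mod_cast hn.ne'
    have hnt : (n : ENNReal) ≠ ⊤ := ENNReal.natCast_ne_top n
    have : (F.card : ENNReal) ≤ (n : ENNReal) := by
      have h2 := mul_le_mul_left h1 (n : ENNReal)
      rwa [mul_assoc, ENNReal.inv_mul_cancel hn0 hnt, mul_one, one_mul] at h2
    rw [hFcard] at this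
    have : (n + 1 : ℕ) ≤ n := by exact_mod_cast this
    omega

end Aux

/-- **Abstract Occam's razor** (second part).
Under Assumption (A), for any prior probability measure `π` on the pool `H` and any
measurable algorithm `x ↦ h_x` returning an object of `H`, the probability over `X ~ P`
that `X ∈ B(h_X, δ·π({h_X}))` is at most `δ`. -/
theorem abstract_occam_razor_algorithm
    {𝒳 : Type*} [MeasurableSpace 𝒳] {H : Type*} [MeasurableSpace H]
    (P : Measure 𝒳) [IsProbabilityMeasure P]
    (B : H → ℝ → Set 𝒳)
    (hBprob : ∀ (h : H) (t : ℝ), 0 ≤ t → t ≤ 1 → P (B h t) ≤ ENNReal.ofReal t)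
    (hBmeas : MeasurableSet {p : 𝒳 × H × ℝ | p.1 ∈ B p.2.1 p.2.2})
    (hB0 : ∀ h : H, B h 0 = ∅)
    (δ : ℝ) (hδ0 : 0 ≤ δ) (hδ1 : δ ≤ 1)
    (π : Measure H) [IsProbabilityMeasure π]
    (hX : 𝒳 → H) (hXmeas : Measurable hX) :
    P {x : 𝒳 | x ∈ B (hX x) (δ * (π {hX x}).toReal)} ≤ ENNReal.ofReal δ := by
  classical
  obtain ⟨D, hDc, hDpair, hDcover⟩ := exists_reps π
  set f : H → ℝ := fun d => δ * (π {d}).toReal with hf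
  have hBsec : ∀ (h d : H), MRel h d → ∀ x t, x ∈ B h t ↔ x ∈ B d t := by
    intro h d hrel x t
    have hmap : Measurable (fun h' : H => ((x, h', t) : 𝒳 × H × ℝ)) :=
      measurable_const.prodMk (measurable_id.prodMk measurable_const)
    exact hrel {h' : H | x ∈ B h' t} (hmap hBmeas)
  have hsub : {x : 𝒳 | x ∈ B (hX x) (δ * (π {hX x}).toReal)} ⊆ ⋃ d ∈ D, B d (f d) := by
    intro x hx
    by_cases h0 : π {hX x} = 0
    · exfalso
      have : x ∈ B (hX x) 0 := by simpa [h0] using hx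
      simp [hB0] at this
    · obtain ⟨d, hdD, hrel⟩ := hDcover (hX x) h0
      have hmeq : π {hX x} = π {d} := hrel.meas_eq π
      refine Set.mem_biUnion hdD ?_
      have : x ∈ B (hX x) (f d) := by
        show x ∈ B (hX x) (δ * (π {d}).toReal)
        rw [← hmeq]; exact hx
      exact (hBsec (hX x) d hrel x (f d)).mp this
  have hf01 : ∀ d : H, 0 ≤ f d ∧ f d ≤ 1 := by
    intro d
    have h1 : (π {d}).toReal ≤ 1 := by
      have := prob_le_one (μ := π) (s := {d})
      simpa using ENNReal.toReal_mono ENNReal.one_ne_top this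
    exact ⟨mul_nonneg hδ0 ENNReal.toReal_nonneg,
      mul_le_one₀ hδ1 ENNReal.toReal_nonneg h1⟩
  calc P {x : 𝒳 | x ∈ B (hX x) (δ * (π {hX x}).toReal)}
      ≤ P (⋃ d ∈ D, B d (f d)) := measure_mono hsub
    _ ≤ ∑' d : D, P (B ↑d (f ↑d)) := measure_biUnion_le P hDc _
    _ ≤ ∑' d : D, ENNReal.ofReal (f ↑d) :=
        ENNReal.tsum_le_tsum fun d => hBprob _ _ (hf01 ↑d).1 (hf01 ↑d).2
    _ = ∑' d : D, ENNReal.ofReal δ * π {(d : H)} := by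
        refine tsum_congr fun d => ?_
        rw [hf, ENNReal.ofReal_mul hδ0, ENNReal.ofReal_toReal (measure_ne_top π _)]
    _ = ENNReal.ofReal δ * ∑' d : D, π {(d : H)} := ENNReal.tsum_mul_left
    _ ≤ ENNReal.ofReal δ * 1 := by
        refine mul_le_mul_right ?_ _
        simpa using sum_singleton_le π D hDc hDpair
    _ = ENNReal.ofReal δ := mul_one _
end

section
/- Let δ ∈ [0,1]. Pose Assumption (A), let μ be a nonnegative measure on ℋ, let π be a probability density function on ℋ with respect to μ, and let X ↦ A_X ⊆ ℋ be an algorithm with (X,h) ↦ 1{h ∈ A_X} bimeasurable such that μ(A_X) = a almost surely for some constant a ∈ (0,∞). Then with level function Δ(h,s) = min(δ·a·π(h), 1), the expectation over X ~ P of the false prediction rate ρ_Δ(X, A_X) is at most δ. -/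
open MeasureTheory
open scoped Classical ENNReal

/-- **Occam's hammer, constant output volume case.**
Under Assumption (A), if `μ` is a volume measure on the pool `H`, `π` a probability
density w.r.t. `μ`, and `x ↦ A x` an algorithm (bimeasurable) returning a set of constant
volume `μ (A x) = a ∈ (0,∞)` a.s., then with level function `Δ(h,s) = min(δ·a·π(h), 1)`
the expected false prediction rate
`ρ_Δ(x, A x) = μ(A x ∩ {h | x ∈ B(h, Δ(h, |A x|))}) / μ(A x)` (set to `0` when
`μ (A x)` is `0` or `∞`) is at most `δ`. -/
theorem occam_hammer_constant_volume
    {𝒳 : Type*} [MeasurableSpace 𝒳] {H : Type*} [MeasurableSpace H]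
    (P : Measure 𝒳) [IsProbabilityMeasure P]
    (B : H → ℝ → Set 𝒳)
    (hBprob : ∀ (h : H) (t : ℝ), 0 ≤ t → t ≤ 1 → P (B h t) ≤ ENNReal.ofReal t)
    (hBmeas : MeasurableSet {p : 𝒳 × H × ℝ | p.1 ∈ B p.2.1 p.2.2})
    (hB0 : ∀ h : H, B h 0 = ∅)
    (δ : ℝ) (hδ0 : 0 ≤ δ) (hδ1 : δ ≤ 1)
    (μ : Measure H)
    (π : H → ℝ) (hπmeas : Measurable π) (hπnn : ∀ h, 0 ≤ π h)
    (hπdens : ∫⁻ h, ENNReal.ofReal (π h) ∂μ = 1)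
    (A : 𝒳 → Set H) (hAmeas : MeasurableSet {p : 𝒳 × H | p.2 ∈ A p.1})
    (a : ℝ) (ha : 0 < a)
    (hconst : ∀ᵐ x ∂P, μ (A x) = ENNReal.ofReal a) :
    ∫⁻ x, (if μ (A x) = 0 ∨ μ (A x) = ⊤ then 0
        else μ (A x ∩ {h : H | x ∈ B h (min (δ * a * π h) 1)}) / μ (A x)) ∂P
      ≤ ENNReal.ofReal δ := by
  set Δ : H → ℝ := fun h => min (δ * a * π h) 1 with hΔdef
  have hΔmeas : Measurable Δ := (measurable_const.mul hπmeas).min measurable_const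
  have hΔ0 : ∀ h, 0 ≤ Δ h := fun h =>
    le_min (by have := hπnn h; positivity) zero_le_one
  have hΔ1 : ∀ h, Δ h ≤ 1 := fun h => min_le_right _ _
  set S : Set (𝒳 × H) := {p | p.1 ∈ B p.2 (Δ p.2)} with hS
  have hSmeas : MeasurableSet S := by
    have heq : S = (fun p : 𝒳 × H => (p.1, p.2, Δ p.2)) ⁻¹'
        {p : 𝒳 × H × ℝ | p.1 ∈ B p.2.1 p.2.2} := rfl
    rw [heq]
    exact hBmeas.preimage
      (measurable_fst.prodMk (measurable_snd.prodMk (hΔmeas.comp measurable_snd)))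
  set U : Set H := {h | 0 < π h} with hU
  have hUmeas : MeasurableSet U := measurableSet_lt measurable_const hπmeas
  -- hypotheses with π h = 0 contribute nothing, by hB0
  have hSU : ∀ p : 𝒳 × H, p ∈ S → p.2 ∈ U := by
    rintro ⟨x, h⟩ hp
    by_contra hcon
    have hπ0 : π h = 0 := le_antisymm (not_lt.mp hcon) (hπnn h)
    have hΔh : Δ h = 0 := by simp [hΔdef, hπ0]
    have : x ∈ B h 0 := by rw [← hΔh]; exact hp
    rw [hB0 h] at this
    exact this
  set ν : Measure H := μ.restrict U with hν
  -- ν is σ-finite by Markov's inequality applied to the density π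
  have hσ : SigmaFinite ν := by
    refine ⟨⟨⟨fun n => {h | (1 : ℝ)/(n+1) ≤ π h} ∪ {h | π h ≤ 0},
      fun _ => trivial, fun n => ?_, ?_⟩⟩⟩
    · have hmeas : MeasurableSet ({h | (1 : ℝ)/(n+1) ≤ π h} ∪ {h | π h ≤ 0}) :=
        (measurableSet_le measurable_const hπmeas).union
          (measurableSet_le hπmeas measurable_const)
      rw [hν, Measure.restrict_apply hmeas]
      have hsub : ({h | (1 : ℝ)/(n+1) ≤ π h} ∪ {h | π h ≤ 0}) ∩ U
          ⊆ {h | ENNReal.ofReal ((1 : ℝ)/(n+1)) ≤ ENNReal.ofReal (π h)} := by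
        rintro h ⟨hh, hhU⟩
        rcases hh with hh | hh
        · exact ENNReal.ofReal_le_ofReal hh
        · simp only [hU, Set.mem_setOf_eq] at hh hhU
          exact absurd hh (not_le.mpr hhU)
      refine lt_of_le_of_lt (measure_mono hsub) ?_
      have hmarkov := mul_meas_ge_le_lintegral₀ (μ := μ)
        (hπmeas.ennreal_ofReal.aemeasurable) (ENNReal.ofReal ((1 : ℝ)/(n+1)))
      rw [hπdens] at hmarkov
      have hε0 : ENNReal.ofReal ((1 : ℝ)/(n+1)) ≠ 0 := by
        simp only [ne_eq, ENNReal.ofReal_eq_zero, not_le]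
        positivity
      by_contra hcon
      push_neg at hcon
      have htop : μ {h | ENNReal.ofReal ((1 : ℝ)/(n+1)) ≤ ENNReal.ofReal (π h)} = ⊤ :=
        top_le_iff.mp hcon
      rw [htop, ENNReal.mul_top hε0] at hmarkov
      exact absurd hmarkov (by simp)
    · refine Set.eq_univ_of_forall fun h => ?_
      rcases le_or_gt (π h) 0 with hh | hh
      · exact Set.mem_iUnion.mpr ⟨0, Or.inr hh⟩
      · obtain ⟨n, hn⟩ := exists_nat_one_div_lt hh
        exact Set.mem_iUnion.mpr ⟨n, Or.inl hn.le⟩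
  have ha0 : ENNReal.ofReal a ≠ 0 := by
    simp only [ne_eq, ENNReal.ofReal_eq_zero, not_le]; exact ha
  have haT : ENNReal.ofReal a ≠ ⊤ := ENNReal.ofReal_ne_top
  have hinvT : (ENNReal.ofReal a)⁻¹ ≠ ⊤ := by
    simp [ENNReal.inv_ne_top, ha0]
  have hslice : ∀ x : 𝒳, MeasurableSet {h : H | (x, h) ∈ S} :=
    fun x => hSmeas.preimage measurable_prodMk_left
  -- Step 1: pointwise a.e. bound
  have step1 : ∫⁻ x, (if μ (A x) = 0 ∨ μ (A x) = ⊤ then 0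
        else μ (A x ∩ {h : H | x ∈ B h (min (δ * a * π h) 1)}) / μ (A x)) ∂P
      ≤ ∫⁻ x, (ENNReal.ofReal a)⁻¹ * ν {h : H | (x, h) ∈ S} ∂P := by
    refine lintegral_mono_ae ?_
    filter_upwards [hconst] with x hx
    rw [hx, if_neg (by simp [ha0, haT])]
    rw [ENNReal.div_eq_inv_mul]
    refine mul_le_mul_right ?_ _
    rw [hν, Measure.restrict_apply (hslice x)]
    refine measure_mono fun h hh => ?_
    exact ⟨hh.2, hSU (x, h) hh.2⟩
  refine step1.trans ?_
  rw [lintegral_const_mul' _ _ hinvT]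
  -- Step 2: Tonelli swap (P is a probability measure, ν is σ-finite)
  have hind : Measurable (Function.uncurry
      fun (x : 𝒳) (h : H) => S.indicator (1 : 𝒳 × H → ℝ≥0∞) (x, h)) :=
    measurable_one.indicator hSmeas
  have key : ∫⁻ x, ν {h : H | (x, h) ∈ S} ∂P = ∫⁻ h, P {x : 𝒳 | (x, h) ∈ S} ∂ν := by
    have h1 : ∀ x, ν {h : H | (x, h) ∈ S} = ∫⁻ h, S.indicator 1 (x, h) ∂ν := by
      intro x
      rw [show (fun h => S.indicator (1 : 𝒳 × H → ℝ≥0∞) (x, h))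
          = (Prod.mk x ⁻¹' S).indicator 1 from by
        funext h; simp [Set.indicator_apply, Set.mem_preimage]]
      rw [lintegral_indicator_one (hSmeas.preimage measurable_prodMk_left)]
      rfl
    have h2 : ∀ h, P {x : 𝒳 | (x, h) ∈ S} = ∫⁻ x, S.indicator 1 (x, h) ∂P := by
      intro h
      rw [show (fun x => S.indicator (1 : 𝒳 × H → ℝ≥0∞) (x, h))
          = ((fun x => (x, h)) ⁻¹' S).indicator 1 from by
        funext x; simp [Set.indicator_apply, Set.mem_preimage]]
      rw [lintegral_indicator_one (hSmeas.preimage measurable_prodMk_right)]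
      rfl
    simp only [h1, h2]
    exact lintegral_lintegral_swap hind.aemeasurable
  rw [key]
  -- Step 3: bound the inner probabilities
  have step3 : ∫⁻ h, P {x : 𝒳 | (x, h) ∈ S} ∂ν ≤ ENNReal.ofReal (δ * a) := by
    calc ∫⁻ h, P {x : 𝒳 | (x, h) ∈ S} ∂ν
        ≤ ∫⁻ h, ENNReal.ofReal (Δ h) ∂ν := by
          refine lintegral_mono fun h => ?_
          have heq : {x : 𝒳 | (x, h) ∈ S} = B h (Δ h) := rfl
          rw [heq]
          exact hBprob h (Δ h) (hΔ0 h) (hΔ1 h)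
      _ ≤ ∫⁻ h, ENNReal.ofReal (δ * a * π h) ∂ν := by
          refine lintegral_mono fun h => ?_
          exact ENNReal.ofReal_le_ofReal (min_le_left _ _)
      _ ≤ ∫⁻ h, ENNReal.ofReal (δ * a * π h) ∂μ :=
          lintegral_mono' Measure.restrict_le_self le_rfl
      _ = ∫⁻ h, ENNReal.ofReal (δ * a) * ENNReal.ofReal (π h) ∂μ := by
          congr 1; funext h
          rw [ENNReal.ofReal_mul (by positivity)]
      _ = ENNReal.ofReal (δ * a) * ∫⁻ h, ENNReal.ofReal (π h) ∂μ :=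
          lintegral_const_mul' _ _ ENNReal.ofReal_ne_top
      _ = ENNReal.ofReal (δ * a) := by rw [hπdens, mul_one]
  calc (ENNReal.ofReal a)⁻¹ * ∫⁻ h, P {x : 𝒳 | (x, h) ∈ S} ∂ν
      ≤ (ENNReal.ofReal a)⁻¹ * ENNReal.ofReal (δ * a) := mul_le_mul_right step3 _
    _ = ENNReal.ofReal δ := by
        rw [ENNReal.ofReal_mul hδ0, mul_comm (ENNReal.ofReal δ), ← mul_assoc,
          ENNReal.inv_mul_cancel ha0 haT, one_mul]
end

section
/- Let δ ∈ [0,1]. Pose Assumption (A), let μ be a nonnegative measure on ℋ, let π be a probability density function on ℋ with respect to μ, let a ∈ (0,∞), and let X ↦ A_X ⊆ ℋ be an algorithm with (X,h) ↦ 1{h ∈ A_X} bimeasurable such that μ(A_X) ≥ a almost surely. Then with level function Δ(h,s) = min(δ·a·π(h), 1), the expectation over X ~ P of the false prediction rate ρ_Δ(X, A_X) is at most δ. -/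
open MeasureTheory
open scoped Classical ENNReal

/-- **Occam's hammer, constant output volume case.**
Under Assumption (A), if `μ` is a volume measure on the pool `H`, `π` a probability
density w.r.t. `μ`, and `x ↦ A x` an algorithm (bimeasurable) returning a set of
volume `μ (A x) ≥ a` a.s., for a constant `a ∈ (0,∞)`, then with level function `Δ(h,s) = min(δ·a·π(h), 1)`
the expected false prediction rate
`ρ_Δ(x, A x) = μ(A x ∩ {h | x ∈ B(h, Δ(h, |A x|))}) / μ(A x)` (set to `0` when
`μ (A x)` is `0` or `∞`) is at most `δ`. -/
theorem occam_hammer_lower_bounded_volume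
    {𝒳 : Type*} [MeasurableSpace 𝒳] {H : Type*} [MeasurableSpace H]
    (P : Measure 𝒳) [IsProbabilityMeasure P]
    (B : H → ℝ → Set 𝒳)
    (hBprob : ∀ (h : H) (t : ℝ), 0 ≤ t → t ≤ 1 → P (B h t) ≤ ENNReal.ofReal t)
    (hBmeas : MeasurableSet {p : 𝒳 × H × ℝ | p.1 ∈ B p.2.1 p.2.2})
    (hB0 : ∀ h : H, B h 0 = ∅)
    (δ : ℝ) (hδ0 : 0 ≤ δ) (hδ1 : δ ≤ 1)
    (μ : Measure H)
    (π : H → ℝ) (hπmeas : Measurable π) (hπnn : ∀ h, 0 ≤ π h)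
    (hπdens : ∫⁻ h, ENNReal.ofReal (π h) ∂μ = 1)
    (A : 𝒳 → Set H) (hAmeas : MeasurableSet {p : 𝒳 × H | p.2 ∈ A p.1})
    (a : ℝ) (ha : 0 < a)
    (hconst : ∀ᵐ x ∂P, ENNReal.ofReal a ≤ μ (A x)) :
    ∫⁻ x, (if μ (A x) = 0 ∨ μ (A x) = ⊤ then 0
        else μ (A x ∩ {h : H | x ∈ B h (min (δ * a * π h) 1)}) / μ (A x)) ∂P
      ≤ ENNReal.ofReal δ := by
  classical
  set Δ : H → ℝ := fun h => min (δ * a * π h) 1 with hΔdef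
  have hΔmeas : Measurable Δ := (measurable_const.mul hπmeas).min measurable_const
  have hΔnn : ∀ h, 0 ≤ Δ h := fun h =>
    le_min (mul_nonneg (mul_nonneg hδ0 ha.le) (hπnn h)) zero_le_one
  have hΔle1 : ∀ h, Δ h ≤ 1 := fun h => min_le_right _ _
  -- measurability of the bad-event set on the product
  have hSmeas : MeasurableSet {p : 𝒳 × H | p.1 ∈ B p.2 (Δ p.2)} := by
    have hm : Measurable (fun p : 𝒳 × H => (p.1, p.2, Δ p.2)) :=
      measurable_fst.prodMk (measurable_snd.prodMk (hΔmeas.comp measurable_snd))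
    exact hm hBmeas
  have hSxmeas : ∀ x : 𝒳, MeasurableSet {h : H | x ∈ B h (Δ h)} := by
    intro x
    exact measurable_prodMk_left hSmeas
  -- the density measure
  set ν : Measure H := μ.withDensity (fun h => ENNReal.ofReal (π h)) with hνdef
  have hνuniv : ν Set.univ = 1 := by
    rw [hνdef, withDensity_apply _ MeasurableSet.univ, Measure.restrict_univ, hπdens]
  haveI : IsFiniteMeasure ν := ⟨by rw [hνuniv]; exact ENNReal.one_lt_top⟩
  -- if π h = 0 then the bad set is empty
  have hπ0 : ∀ h, π h = 0 → B h (Δ h) = ∅ := by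
    intro h h0
    have : Δ h = 0 := by simp [hΔdef, h0]
    rw [this, hB0]
  -- rewrite μ of the bad section as a ν-integral
  set F : 𝒳 → H → ℝ≥0∞ := fun x h =>
    (ENNReal.ofReal (π h))⁻¹ * Set.indicator {h : H | x ∈ B h (Δ h)} 1 h with hFdef
  have hkey : ∀ x, μ {h : H | x ∈ B h (Δ h)} = ∫⁻ h, F x h ∂ν := by
    intro x
    have hg : Measurable (F x) := by
      exact ((hπmeas.ennreal_ofReal).inv).mul
        ((measurable_const.indicator (hSxmeas x)))
    rw [hνdef, lintegral_withDensity_eq_lintegral_mul _ hπmeas.ennreal_ofReal hg]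
    have : ∀ h, ((fun h => ENNReal.ofReal (π h)) * F x) h
        = Set.indicator {h : H | x ∈ B h (Δ h)} 1 h := by
      intro h
      by_cases h0 : π h = 0
      · have : h ∉ {h : H | x ∈ B h (Δ h)} := by
          simp [hπ0 h h0]
        simp [hFdef, Set.indicator_of_notMem this]
      · have hne : ENNReal.ofReal (π h) ≠ 0 := by
          simp [ENNReal.ofReal_eq_zero, not_le, lt_of_le_of_ne (hπnn h) (Ne.symm h0)]
        have hnt : ENNReal.ofReal (π h) ≠ ⊤ := ENNReal.ofReal_ne_top
        simp only [hFdef, Pi.mul_apply, ← mul_assoc, ENNReal.mul_inv_cancel hne hnt, one_mul]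
    rw [funext this]
    rw [lintegral_indicator_one (hSxmeas x)]
  -- pointwise bound on the integrand
  have hbound : ∀ᵐ x ∂P,
      (if μ (A x) = 0 ∨ μ (A x) = ⊤ then 0
        else μ (A x ∩ {h : H | x ∈ B h (min (δ * a * π h) 1)}) / μ (A x))
      ≤ μ {h : H | x ∈ B h (Δ h)} / ENNReal.ofReal a := by
    filter_upwards [hconst] with x hx
    by_cases hc : μ (A x) = 0 ∨ μ (A x) = ⊤
    · simp [hc]
    · rw [if_neg hc]
      exact ENNReal.div_le_div (measure_mono Set.inter_subset_right) hx
  calc ∫⁻ x, (if μ (A x) = 0 ∨ μ (A x) = ⊤ then 0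
        else μ (A x ∩ {h : H | x ∈ B h (min (δ * a * π h) 1)}) / μ (A x)) ∂P
      ≤ ∫⁻ x, μ {h : H | x ∈ B h (Δ h)} / ENNReal.ofReal a ∂P :=
        lintegral_mono_ae hbound
    _ = (∫⁻ x, μ {h : H | x ∈ B h (Δ h)} ∂P) / ENNReal.ofReal a := by
        simp only [div_eq_mul_inv]
        rw [lintegral_mul_const']
        exact ENNReal.inv_ne_top.2 (by simp [ENNReal.ofReal_eq_zero, not_le, ha])
    _ ≤ ENNReal.ofReal (δ * a) / ENNReal.ofReal a := by
        apply ENNReal.div_le_div_right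
        have hswap : ∫⁻ x, ∫⁻ h, F x h ∂ν ∂P = ∫⁻ h, ∫⁻ x, F x h ∂P ∂ν := by
          apply lintegral_lintegral_swap
          have hm : Measurable (fun p : 𝒳 × H =>
              (ENNReal.ofReal (π p.2))⁻¹ *
                Set.indicator {p : 𝒳 × H | p.1 ∈ B p.2 (Δ p.2)} 1 p) :=
            ((hπmeas.comp measurable_snd).ennreal_ofReal.inv).mul
              (measurable_const.indicator hSmeas)
          have heq : Function.uncurry F = fun p : 𝒳 × H =>
              (ENNReal.ofReal (π p.2))⁻¹ *
                Set.indicator {p : 𝒳 × H | p.1 ∈ B p.2 (Δ p.2)} 1 p := by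
            funext p
            by_cases hp : p.1 ∈ B p.2 (Δ p.2) <;>
              simp [Function.uncurry, hFdef, hp]
          rw [heq]
          exact hm.aemeasurable
        calc ∫⁻ x, μ {h : H | x ∈ B h (Δ h)} ∂P
            = ∫⁻ x, ∫⁻ h, F x h ∂ν ∂P := by simp_rw [hkey]
          _ = ∫⁻ h, ∫⁻ x, F x h ∂P ∂ν := hswap
          _ ≤ ∫⁻ h, ENNReal.ofReal (δ * a) ∂ν := by
              apply lintegral_mono
              intro h
              have hrw : ∀ x, F x h
                  = Set.indicator (B h (Δ h))
                      (fun _ => (ENNReal.ofReal (π h))⁻¹) x := by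
                intro x
                by_cases hx : x ∈ B h (Δ h) <;> simp [hFdef, hx]
              have hBm : MeasurableSet (B h (Δ h)) := by
                have hm : Measurable (fun x : 𝒳 => (x, h, Δ h)) :=
                  measurable_id.prodMk measurable_const
                exact hm hBmeas
              simp_rw [hrw]
              rw [lintegral_indicator_const hBm]
              by_cases h0 : π h = 0
              · rw [hπ0 h h0, measure_empty, mul_zero]
                exact zero_le
              · have hπpos : 0 < π h := lt_of_le_of_ne (hπnn h) (Ne.symm h0)
                have hne : ENNReal.ofReal (π h) ≠ 0 := by
                  simp [ENNReal.ofReal_eq_zero, not_le, hπpos]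
                have hPB : P (B h (Δ h)) ≤ ENNReal.ofReal (δ * a * π h) := by
                  refine le_trans (hBprob h (Δ h) (hΔnn h) (hΔle1 h)) ?_
                  exact ENNReal.ofReal_le_ofReal (min_le_left _ _)
                calc (ENNReal.ofReal (π h))⁻¹ * P (B h (Δ h))
                    ≤ (ENNReal.ofReal (π h))⁻¹ * ENNReal.ofReal (δ * a * π h) := by
                      exact mul_le_mul_right hPB _
                  _ = ENNReal.ofReal (δ * a) := by
                      rw [ENNReal.ofReal_mul (mul_nonneg hδ0 ha.le), mul_comm,
                        mul_assoc, ENNReal.mul_inv_cancel hne ENNReal.ofReal_ne_top,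
                        mul_one]
          _ = ENNReal.ofReal (δ * a) := by
              rw [lintegral_const, hνuniv, mul_one]
    _ = ENNReal.ofReal δ := by
        rw [ENNReal.ofReal_mul hδ0, mul_div_assoc,
          ENNReal.div_self (by simp [ENNReal.ofReal_eq_zero, not_le, ha])
            ENNReal.ofReal_ne_top, mul_one]
end

section
/- (Occam's hammer.) Let δ ∈ [0,1]. Pose Assumption (A'). Let μ be a nonnegative reference measure on ℋ, π a probability density function with respect to μ, and γ a probability distribution on (0,∞). Put β(x) = ∫_{(0,x]} u dγ(u) for x ∈ (0,∞), and define the level function Δ(h,θ) = min(δ·π(h)·β(θ⁻¹), 1). Then for any algorithm X ↦ θ_X returning a probability density θ_X on ℋ with respect to μ such that (X,h) ↦ θ_X(h) is bimeasurable, one has ∫_𝒳 ∫_ℋ 1{X ∈ B(h, Δ(h, θ_X(h)))} θ_X(h) dμ(h) dP(X) ≤ δ; that is, the probability over X ~ P and h drawn from the distribution θ_X·μ that X ∈ B(h, Δ(h, θ_X(h))) is at most δ. -/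
open MeasureTheory
open scoped ENNReal

open Set in
lemma occamAux (γ : Measure ℝ) [IsProbabilityMeasure γ] (hγ : γ (Set.Iic 0) = 0) :
    ∫⁻ t in Set.Ioi (0:ℝ), ∫⁻ u in Set.Ioc 0 t⁻¹, ENNReal.ofReal u ∂γ = 1 := by
  classical
  set f : ℝ → ℝ → ℝ≥0∞ := fun t u => if 0 < u ∧ u ≤ t⁻¹ then ENNReal.ofReal u else 0 with hf
  have hmeas : Measurable (Function.uncurry f) := by
    have hset : MeasurableSet {p : ℝ × ℝ | 0 < p.2 ∧ p.2 ≤ p.1⁻¹} :=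
      (measurableSet_lt measurable_const measurable_snd).inter
        (measurableSet_le measurable_snd measurable_fst.inv)
    exact Measurable.ite hset (measurable_snd.ennreal_ofReal) measurable_const
  have hinner : ∀ t : ℝ, (∫⁻ u in Set.Ioc 0 t⁻¹, ENNReal.ofReal u ∂γ) = ∫⁻ u, f t u ∂γ := by
    intro t
    rw [← lintegral_indicator measurableSet_Ioc]
    refine lintegral_congr fun u => ?_
    rw [Set.indicator_apply]
    simp only [Set.mem_Ioc, hf]
  calc ∫⁻ t in Set.Ioi (0:ℝ), ∫⁻ u in Set.Ioc 0 t⁻¹, ENNReal.ofReal u ∂γ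
      = ∫⁻ t in Set.Ioi (0:ℝ), ∫⁻ u, f t u ∂γ := by
        exact lintegral_congr fun t => hinner t
    _ = ∫⁻ u, (∫⁻ t in Set.Ioi (0:ℝ), f t u) ∂γ := by
        exact lintegral_lintegral_swap (μ := volume.restrict (Set.Ioi 0)) (ν := γ) hmeas.aemeasurable
    _ = ∫⁻ u, 1 ∂γ := by
        refine lintegral_congr_ae ?_
        have hae : ∀ᵐ u ∂γ, 0 < u := by
          rw [ae_iff]
          convert hγ using 2
          ext u; simp [not_lt]
        filter_upwards [hae] with u hu
        have hfu : ∀ t : ℝ, f t u = (Set.Ioc 0 u⁻¹).indicator (fun _ => ENNReal.ofReal u) t := by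
          intro t
          rw [Set.indicator_apply]
          by_cases ht : 0 < t
          · have : (u ≤ t⁻¹) ↔ (t ≤ u⁻¹) := by
              rw [← one_div, ← one_div, le_div_iff₀ ht, le_div_iff₀ hu]
              constructor <;> intro h <;> nlinarith
            simp [hf, hu, Set.mem_Ioc, ht, this]
          · have h1 : ¬ (u ≤ t⁻¹) := by
              push_neg
              have : t⁻¹ ≤ 0 := inv_nonpos.2 (not_lt.1 ht)
              linarith
            simp [hf, hu, Set.mem_Ioc, ht, h1]
        calc ∫⁻ t in Set.Ioi (0:ℝ), f t u
            = ∫⁻ t in Set.Ioi (0:ℝ), (Set.Ioc 0 u⁻¹).indicator (fun _ => ENNReal.ofReal u) t := by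
              exact lintegral_congr fun t => by rw [hfu t]
          _ = ∫⁻ t in Set.Ioc 0 u⁻¹, ENNReal.ofReal u ∂(volume.restrict (Set.Ioi 0)) := by
              rw [lintegral_indicator measurableSet_Ioc]
          _ = ENNReal.ofReal u * (volume.restrict (Set.Ioi 0)) (Set.Ioc 0 u⁻¹) := by
              rw [setLIntegral_const]
          _ = ENNReal.ofReal u * ENNReal.ofReal u⁻¹ := by
              rw [Measure.restrict_apply measurableSet_Ioc, Set.Ioc_inter_Ioi, max_self,
                Real.volume_Ioc, sub_zero]
          _ = 1 := by
              rw [← ENNReal.ofReal_mul hu.le, mul_inv_cancel₀ (ne_of_gt hu)]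
              exact ENNReal.ofReal_one
    _ = 1 := by simp

open Set in
/-- **Occam's hammer** (main theorem).
Pose Assumption (A'): bad events `B h t` with `P(B h t) ≤ t` for `t ∈ [0,1]`, jointly
measurable, `B h 0 = ∅`, nondecreasing in the level `t`. Let `μ` be a reference measure on
the pool `H`, `π` a probability density (complexity prior) w.r.t. `μ`, and `γ` a probability
distribution on `(0,∞)` (inverse density prior); put `β(x) = ∫_(0,x] u dγ(u)` and
`Δ(h,θ) = min(δ·π(h)·β(θ⁻¹), 1)`. Then for any algorithm `x ↦ θ x` returning a probability
density `θ x` over `H` w.r.t. `μ` (bimeasurably), the probability over `X ~ P` and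
`h ~ θ_X·μ` that `X ∈ B(h, Δ(h, θ_X(h)))` is at most `δ`. -/
theorem occam_hammer
    {𝒳 : Type*} [MeasurableSpace 𝒳] {H : Type*} [MeasurableSpace H]
    (P : Measure 𝒳) [IsProbabilityMeasure P]
    (B : H → ℝ → Set 𝒳)
    (hBprob : ∀ (h : H) (t : ℝ), 0 ≤ t → t ≤ 1 → P (B h t) ≤ ENNReal.ofReal t)
    (hBmeas : MeasurableSet {p : 𝒳 × H × ℝ | p.1 ∈ B p.2.1 p.2.2})
    (hB0 : ∀ h : H, B h 0 = ∅)
    (hBmono : ∀ (h : H) (t t' : ℝ), t ≤ t' → B h t ⊆ B h t')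
    (δ : ℝ) (hδ0 : 0 ≤ δ) (hδ1 : δ ≤ 1)
    (μ : Measure H)
    (π : H → ℝ) (hπmeas : Measurable π) (hπnn : ∀ h, 0 ≤ π h)
    (hπdens : ∫⁻ h, ENNReal.ofReal (π h) ∂μ = 1)
    (γ : Measure ℝ) [IsProbabilityMeasure γ] (hγ : γ (Set.Iic 0) = 0)
    (θ : 𝒳 → H → ℝ) (hθmeas : Measurable (Function.uncurry θ))
    (hθnn : ∀ x h, 0 ≤ θ x h)
    (hθdens : ∀ x, ∫⁻ h, ENNReal.ofReal (θ x h) ∂μ = 1) :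
    ∫⁻ x, ∫⁻ h,
        Set.indicator
          {h' : H | x ∈ B h' (min (δ * π h' * ∫ u in Set.Ioc 0 (θ x h')⁻¹, u ∂γ) 1)}
          (fun h' => ENNReal.ofReal (θ x h')) h ∂μ ∂P
      ≤ ENNReal.ofReal δ := by
  classical
  set β : ℝ → ℝ := fun s => ∫ u in Set.Ioc 0 s, u ∂γ with hβdef
  -- basic facts about β
  have βint : ∀ s : ℝ, IntegrableOn (fun u : ℝ => u) (Set.Ioc 0 s) γ := by
    intro s
    refine Measure.integrableOn_of_bounded (M := max s 0) (measure_ne_top γ _)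
      measurable_id.aestronglyMeasurable ?_
    refine ae_restrict_of_forall_mem measurableSet_Ioc fun u hu => ?_
    rw [Real.norm_eq_abs, abs_of_pos hu.1]
    exact le_max_of_le_left hu.2
  have βmono : Monotone β := by
    intro a b hab
    exact setIntegral_mono_set (βint b)
      (ae_restrict_of_forall_mem measurableSet_Ioc fun u hu => hu.1.le)
      (HasSubset.Subset.eventuallyLE (Set.Ioc_subset_Ioc_right hab))
  have βnn : ∀ s, 0 ≤ β s := fun s => setIntegral_nonneg measurableSet_Ioc fun u hu => hu.1.le
  have βmeas : Measurable β := βmono.measurable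
  have βofReal : ∀ s, ENNReal.ofReal (β s) = ∫⁻ u in Set.Ioc 0 s, ENNReal.ofReal u ∂γ :=
    fun s => ofReal_integral_eq_lintegral_ofReal (βint s)
      (ae_restrict_of_forall_mem measurableSet_Ioc fun u hu => hu.1.le)
  -- the level function
  set D : H → ℝ → ℝ := fun h t => min (δ * π h * β t⁻¹) 1 with hDdef
  have hDnn : ∀ h t, 0 ≤ D h t := fun h t =>
    le_min (mul_nonneg (mul_nonneg hδ0 (hπnn h)) (βnn _)) zero_le_one
  have hDle1 : ∀ h t, D h t ≤ 1 := fun h t => min_le_right _ _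
  have hDmeas : Measurable (Function.uncurry D) :=
    ((measurable_const.mul (hπmeas.comp measurable_fst)).mul
      ((βmeas.comp measurable_inv).comp measurable_snd)).min measurable_const
  -- measurable sections of B
  have hBsec : ∀ (h : H) (t : ℝ), MeasurableSet (B h t) := by
    intro h t
    have : B h t = (fun x : 𝒳 => (x, h, t)) ⁻¹' {p : 𝒳 × H × ℝ | p.1 ∈ B p.2.1 p.2.2} := by
      ext x; simp
    rw [this]
    exact (measurable_id.prodMk measurable_const) hBmeas
  -- the master set and indicator function
  set E : Set (𝒳 × H × ℝ) :=
    {p | p.1 ∈ B p.2.1 (D p.2.1 p.2.2) ∧ 0 < p.2.2 ∧ p.2.2 < θ p.1 p.2.1} with hEdef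
  have hEmeas : MeasurableSet E := by
    have h1 : MeasurableSet {p : 𝒳 × H × ℝ | p.1 ∈ B p.2.1 (D p.2.1 p.2.2)} := by
      have : {p : 𝒳 × H × ℝ | p.1 ∈ B p.2.1 (D p.2.1 p.2.2)} =
          (fun p : 𝒳 × H × ℝ => (p.1, p.2.1, D p.2.1 p.2.2)) ⁻¹'
            {q : 𝒳 × H × ℝ | q.1 ∈ B q.2.1 q.2.2} := rfl
      rw [this]
      exact (measurable_fst.prodMk (measurable_snd.fst.prodMk
        (hDmeas.comp (measurable_snd.fst.prodMk measurable_snd.snd)))) hBmeas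
    have h2 : MeasurableSet {p : 𝒳 × H × ℝ | 0 < p.2.2} :=
      measurableSet_lt measurable_const measurable_snd.snd
    have h3 : MeasurableSet {p : 𝒳 × H × ℝ | p.2.2 < θ p.1 p.2.1} :=
      measurableSet_lt measurable_snd.snd
        (hθmeas.comp (measurable_fst.prodMk measurable_snd.fst))
    exact h1.inter (h2.inter h3)
  set g : 𝒳 → H → ℝ → ℝ≥0∞ := fun x h t => E.indicator 1 (x, h, t) with hgdef
  -- Step A : pointwise layer-cake bound
  have stepA : ∀ (x : 𝒳) (h : H),
      Set.indicator {h' : H | x ∈ B h' (min (δ * π h' * β (θ x h')⁻¹) 1)}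
        (fun h' => ENNReal.ofReal (θ x h')) h ≤ ∫⁻ t, g x h t := by
    intro x h
    rw [Set.indicator_apply]
    split_ifs with hx
    · have hpt : ∀ t : ℝ, (Set.Ioo 0 (θ x h)).indicator 1 t ≤ g x h t := by
        intro t
        by_cases ht : t ∈ Set.Ioo 0 (θ x h)
        · have hmem : (x, h, t) ∈ E := by
            refine ⟨?_, ht.1, ht.2⟩
            refine hBmono h _ _ ?_ hx
            refine min_le_min (mul_le_mul_of_nonneg_left ?_ (mul_nonneg hδ0 (hπnn h))) le_rfl
            exact βmono (inv_anti₀ ht.1 ht.2.le)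
          simp [hgdef, Set.indicator_of_mem hmem, Set.indicator_of_mem ht]
        · rw [Set.indicator_of_notMem ht]; exact zero_le
      calc ENNReal.ofReal (θ x h) = volume (Set.Ioo 0 (θ x h)) := by
            rw [Real.volume_Ioo, sub_zero]
        _ = ∫⁻ t, (Set.Ioo 0 (θ x h)).indicator 1 t := (lintegral_indicator_one measurableSet_Ioo).symm
        _ ≤ ∫⁻ t, g x h t := lintegral_mono hpt
    · exact zero_le
  -- the sigma-finite support of π
  set S : Set H := {h | 0 < π h} with hSdef
  have hSmeas : MeasurableSet S := measurableSet_lt measurable_const hπmeas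
  have hzero : ∀ (x : 𝒳) (h : H), h ∉ S → (∫⁻ t, g x h t) = 0 := by
    intro x h hh
    have hπ0 : π h = 0 := le_antisymm (not_lt.1 hh) (hπnn h)
    have hg0 : ∀ t, g x h t = 0 := by
      intro t
      refine Set.indicator_of_notMem ?_ _
      rintro ⟨hB', -, -⟩
      have hD0 : D h t = 0 := by simp [hDdef, hπ0]
      rw [hD0, hB0 h] at hB'
      exact hB'
    simp [hg0]
  have hrestrict : ∀ x : 𝒳, (∫⁻ h, (∫⁻ t, g x h t) ∂μ) = ∫⁻ h in S, (∫⁻ t, g x h t) ∂μ := by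
    intro x
    rw [← lintegral_indicator hSmeas]
    refine lintegral_congr fun h => ?_
    by_cases hh : h ∈ S
    · rw [Set.indicator_of_mem hh]
    · rw [Set.indicator_of_notMem hh, hzero x h hh]
  haveI hSfin : SigmaFinite (μ.restrict S) := by
    refine ⟨⟨⟨fun n => {h | (1:ℝ)/(n+1) < π h} ∪ Sᶜ, fun _ => trivial, ?_, ?_⟩⟩⟩
    · intro n
      have hmeasn : MeasurableSet ({h | (1:ℝ)/(n+1) < π h} ∪ Sᶜ) :=
        (measurableSet_lt measurable_const hπmeas).union hSmeas.compl
      rw [Measure.restrict_apply hmeasn]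
      have hsub : ({h | (1:ℝ)/(n+1) < π h} ∪ Sᶜ) ∩ S ⊆ {h | (1:ℝ)/(n+1) < π h} := by
        rintro h ⟨hu, hs⟩
        rcases hu with hu | hu
        · exact hu
        · exact absurd hs hu
      have hpos : (0:ℝ) < 1/(n+1) := by positivity
      calc μ (({h | (1:ℝ)/(n+1) < π h} ∪ Sᶜ) ∩ S) ≤ μ {h | (1:ℝ)/(n+1) < π h} :=
            measure_mono hsub
        _ ≤ μ {h | ENNReal.ofReal ((1:ℝ)/(n+1)) ≤ ENNReal.ofReal (π h)} :=
            measure_mono fun h hh => ENNReal.ofReal_le_ofReal (le_of_lt hh)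
        _ ≤ (∫⁻ h, ENNReal.ofReal (π h) ∂μ) / ENNReal.ofReal ((1:ℝ)/(n+1)) :=
            meas_ge_le_lintegral_div hπmeas.ennreal_ofReal.aemeasurable
              (ne_of_gt (ENNReal.ofReal_pos.2 hpos)) ENNReal.ofReal_ne_top
        _ < ⊤ := by
            rw [hπdens]
            exact ENNReal.div_lt_top ENNReal.one_ne_top (ne_of_gt (ENNReal.ofReal_pos.2 hpos))
    · rw [Set.eq_univ_iff_forall]
      intro h
      by_cases hh : h ∈ S
      · obtain ⟨n, hn⟩ := exists_nat_one_div_lt (show (0:ℝ) < π h from hh)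
        exact Set.mem_iUnion.2 ⟨n, Or.inl hn⟩
      · exact Set.mem_iUnion.2 ⟨0, Or.inr hh⟩
  -- measurability for the swaps
  have hgmeas3 : Measurable (fun q : (𝒳 × H) × ℝ => g q.1.1 q.1.2 q.2) := by
    have : (fun q : (𝒳 × H) × ℝ => g q.1.1 q.1.2 q.2) =
        (E.indicator 1) ∘ (fun q : (𝒳 × H) × ℝ => (q.1.1, q.1.2, q.2)) := rfl
    rw [this]
    exact (measurable_const.indicator hEmeas).comp
      (measurable_fst.fst.prodMk (measurable_fst.snd.prodMk measurable_snd))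
  have hg2meas : Measurable (fun p : 𝒳 × H => ∫⁻ t, g p.1 p.2 t) :=
    Measurable.lintegral_prod_right (f := fun (p : 𝒳 × H) (t : ℝ) => g p.1 p.2 t) hgmeas3
  have swap1 : ∫⁻ x, (∫⁻ h in S, (∫⁻ t, g x h t) ∂μ) ∂P
      = ∫⁻ h in S, (∫⁻ x, (∫⁻ t, g x h t) ∂P) ∂μ :=
    lintegral_lintegral_swap (μ := P) (ν := μ.restrict S) hg2meas.aemeasurable
  have swap2 : ∀ h : H, (∫⁻ x, (∫⁻ t, g x h t) ∂P) = ∫⁻ t, (∫⁻ x, g x h t ∂P) := by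
    intro h
    refine lintegral_lintegral_swap (μ := P) (ν := (volume : Measure ℝ)) ?_
    have : Measurable (fun q : 𝒳 × ℝ => g q.1 h q.2) := by
      have : (fun q : 𝒳 × ℝ => g q.1 h q.2) =
          (E.indicator 1) ∘ (fun q : 𝒳 × ℝ => (q.1, h, q.2)) := rfl
      rw [this]
      exact (measurable_const.indicator hEmeas).comp
        (measurable_fst.prodMk (measurable_const.prodMk measurable_snd))
    exact this.aemeasurable
  -- Step D : the inner probability bound
  have stepD : ∀ (h : H) (t : ℝ), (∫⁻ x, g x h t ∂P)
      ≤ (Set.Ioi (0:ℝ)).indicator (fun t => ENNReal.ofReal (δ * π h * β t⁻¹)) t := by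
    intro h t
    by_cases ht : 0 < t
    · have hpt : ∀ x, g x h t ≤ (B h (D h t)).indicator 1 x := by
        intro x
        by_cases hx : (x, h, t) ∈ E
        · rw [Set.indicator_of_mem hx.1]
          simp [hgdef, Set.indicator_of_mem hx]
        · simp [hgdef, Set.indicator_of_notMem hx]
      rw [Set.indicator_of_mem (Set.mem_Ioi.2 ht)]
      calc (∫⁻ x, g x h t ∂P) ≤ ∫⁻ x, (B h (D h t)).indicator 1 x ∂P := lintegral_mono hpt
        _ = P (B h (D h t)) := lintegral_indicator_one (hBsec h _)
        _ ≤ ENNReal.ofReal (D h t) := hBprob h _ (hDnn h t) (hDle1 h t)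
        _ ≤ ENNReal.ofReal (δ * π h * β t⁻¹) := ENNReal.ofReal_le_ofReal (min_le_left _ _)
    · have hg0 : ∀ x, g x h t = 0 := by
        intro x
        refine Set.indicator_of_notMem ?_ _
        rintro ⟨-, ht', -⟩
        exact ht ht'
      simp [hg0]
  -- Step E : integrate over t
  have stepE : ∀ h : H, (∫⁻ t, (Set.Ioi (0:ℝ)).indicator
      (fun t => ENNReal.ofReal (δ * π h * β t⁻¹)) t)
      = ENNReal.ofReal (δ * π h) := by
    intro h
    rw [lintegral_indicator measurableSet_Ioi]
    have hkey : ∫⁻ t in Set.Ioi (0:ℝ), ENNReal.ofReal (β t⁻¹) = 1 := by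
      rw [show (fun t : ℝ => ENNReal.ofReal (β t⁻¹)) =
        fun t : ℝ => ∫⁻ u in Set.Ioc 0 t⁻¹, ENNReal.ofReal u ∂γ from funext fun t => βofReal t⁻¹]
      exact occamAux γ hγ
    calc (∫⁻ t in Set.Ioi (0:ℝ), ENNReal.ofReal (δ * π h * β t⁻¹))
        = ∫⁻ t in Set.Ioi (0:ℝ), ENNReal.ofReal (δ * π h) * ENNReal.ofReal (β t⁻¹) := by
          refine lintegral_congr fun t => ?_
          rw [← ENNReal.ofReal_mul (mul_nonneg hδ0 (hπnn h))]
      _ = ENNReal.ofReal (δ * π h) * ∫⁻ t in Set.Ioi (0:ℝ), ENNReal.ofReal (β t⁻¹) :=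
          lintegral_const_mul _ ((βmeas.comp measurable_inv).ennreal_ofReal)
      _ = ENNReal.ofReal (δ * π h) := by rw [hkey, mul_one]
  -- Step F : integrate over h
  have stepF : (∫⁻ h in S, ENNReal.ofReal (δ * π h) ∂μ) ≤ ENNReal.ofReal δ := by
    calc (∫⁻ h in S, ENNReal.ofReal (δ * π h) ∂μ) ≤ ∫⁻ h, ENNReal.ofReal (δ * π h) ∂μ :=
          setLIntegral_le_lintegral _ _
      _ = ∫⁻ h, ENNReal.ofReal δ * ENNReal.ofReal (π h) ∂μ := by
          refine lintegral_congr fun h => ?_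
          rw [← ENNReal.ofReal_mul hδ0]
      _ = ENNReal.ofReal δ * ∫⁻ h, ENNReal.ofReal (π h) ∂μ :=
          lintegral_const_mul _ hπmeas.ennreal_ofReal
      _ = ENNReal.ofReal δ := by rw [hπdens, mul_one]
  -- Assemble
  calc ∫⁻ x, ∫⁻ h,
        Set.indicator
          {h' : H | x ∈ B h' (min (δ * π h' * ∫ u in Set.Ioc 0 (θ x h')⁻¹, u ∂γ) 1)}
          (fun h' => ENNReal.ofReal (θ x h')) h ∂μ ∂P
      ≤ ∫⁻ x, (∫⁻ h, (∫⁻ t, g x h t) ∂μ) ∂P :=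
        lintegral_mono fun x => lintegral_mono fun h => stepA x h
    _ = ∫⁻ x, (∫⁻ h in S, (∫⁻ t, g x h t) ∂μ) ∂P :=
        lintegral_congr fun x => hrestrict x
    _ = ∫⁻ h in S, (∫⁻ x, (∫⁻ t, g x h t) ∂P) ∂μ := swap1
    _ = ∫⁻ h in S, (∫⁻ t, (∫⁻ x, g x h t ∂P)) ∂μ :=
        lintegral_congr fun h => swap2 h
    _ ≤ ∫⁻ h in S, (∫⁻ t, (Set.Ioi (0:ℝ)).indicator
          (fun t => ENNReal.ofReal (δ * π h * β t⁻¹)) t) ∂μ :=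
        lintegral_mono fun h => lintegral_mono fun t => stepD h t
    _ ≤ ∫⁻ h in S, ENNReal.ofReal (δ * π h) ∂μ :=
        lintegral_mono fun h => (stepE h).le
    _ ≤ ENNReal.ofReal δ := stepF
end

section
/- Let δ ∈ [0,1]. Pose Assumption (A'). Let μ be a nonnegative reference measure on ℋ, π a probability density function with respect to μ, and γ a probability distribution on (0,∞); put β(x) = ∫_{(0,x]} u dγ(u). Then for any algorithm X ↦ A_X ⊆ ℋ with (X,h) ↦ 1{h ∈ A_X} bimeasurable, with level function Δ(h,s) = min(δ·π(h)·β(s), 1) the expectation over X ~ P of the false prediction rate ρ_Δ(X, A_X) is at most δ. -/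
open MeasureTheory
open scoped Classical ENNReal

set_option linter.unusedSectionVars false

namespace OccamAux

variable {𝒳 : Type*} [MeasurableSpace 𝒳] {H : Type*} [MeasurableSpace H]

/-- critical level of observation `x` for hypothesis `h` -/
noncomputable def Ufn (B : H → ℝ → Set 𝒳) (h : H) (x : 𝒳) : ℝ :=
  sInf ({t : ℝ | x ∈ B h t ∧ t ≤ 1} ∪ {1})

section U

variable {B : H → ℝ → Set 𝒳} (hB0 : ∀ h : H, B h 0 = ∅)
  (hBmono : ∀ (h : H) (t t' : ℝ), t ≤ t' → B h t ⊆ B h t')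

include hB0 hBmono

theorem Uset_bdd (h : H) (x : 𝒳) :
    BddBelow ({t : ℝ | x ∈ B h t ∧ t ≤ 1} ∪ {1}) := by
  refine ⟨0, fun y hy => ?_⟩
  rcases hy with hy | hy
  · by_contra hneg
    push_neg at hneg
    have : x ∈ B h 0 := hBmono h y 0 hneg.le hy.1
    simp [hB0 h] at this
  · simp only [Set.mem_singleton_iff] at hy
    simp [hy]

omit [MeasurableSpace 𝒳] [MeasurableSpace H] hB0 hBmono in
theorem Uset_nonempty (h : H) (x : 𝒳) :
    ({t : ℝ | x ∈ B h t ∧ t ≤ 1} ∪ {1}).Nonempty := ⟨1, Or.inr rfl⟩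

theorem Ufn_le {h : H} {x : 𝒳} {t : ℝ} (hx : x ∈ B h t) (ht : t ≤ 1) :
    Ufn B h x ≤ t :=
  csInf_le (Uset_bdd hB0 hBmono h x) (Or.inl ⟨hx, ht⟩)

theorem Ufn_lt {h : H} {x : 𝒳} {c : ℝ} (hlt : Ufn B h x < c) (hc : c ≤ 1) :
    x ∈ B h c := by
  obtain ⟨m, hm, hmc⟩ :=
    (csInf_lt_iff (Uset_bdd hB0 hBmono h x) (Uset_nonempty h x)).1 hlt
  rcases hm with hm | hm
  · exact hBmono h m c hmc.le hm.1
  · simp only [Set.mem_singleton_iff] at hm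
    subst hm; linarith

theorem Ufn_tail (P : Measure 𝒳) [IsProbabilityMeasure P]
    (hBprob : ∀ (h : H) (t : ℝ), 0 ≤ t → t ≤ 1 → P (B h t) ≤ ENNReal.ofReal t)
    (h : H) {c : ℝ} (hc : 0 ≤ c) :
    P {x | Ufn B h x ≤ c} ≤ ENNReal.ofReal c := by
  by_cases hc1 : 1 ≤ c
  · calc P {x | Ufn B h x ≤ c} ≤ P Set.univ := measure_mono (Set.subset_univ _)
      _ = 1 := measure_univ
      _ ≤ ENNReal.ofReal c := by
          rw [← ENNReal.ofReal_one]; exact ENNReal.ofReal_le_ofReal hc1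
  · push_neg at hc1
    refine ENNReal.le_of_forall_pos_le_add fun ε hε _ => ?_
    set c' := min (c + (ε : ℝ)) 1 with hc'def
    have hεpos : (0:ℝ) < ε := hε
    have hcc' : c < c' := lt_min (by linarith) hc1
    have hsub : {x | Ufn B h x ≤ c} ⊆ B h c' := fun x hx =>
      Ufn_lt hB0 hBmono (lt_of_le_of_lt hx hcc') (min_le_right _ _)
    calc P {x | Ufn B h x ≤ c} ≤ P (B h c') := measure_mono hsub
      _ ≤ ENNReal.ofReal c' := hBprob h c' (le_min (by linarith) zero_le_one)
            (min_le_right _ _)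
      _ ≤ ENNReal.ofReal (c + (ε:ℝ)) := ENNReal.ofReal_le_ofReal (min_le_left _ _)
      _ = ENNReal.ofReal c + ENNReal.ofReal (ε:ℝ) := ENNReal.ofReal_add hc hεpos.le
      _ = ENNReal.ofReal c + ε := by rw [ENNReal.ofReal_coe_nnreal]

theorem Ufn_measurable
    (hBmeas : MeasurableSet {p : 𝒳 × H × ℝ | p.1 ∈ B p.2.1 p.2.2}) :
    Measurable (fun p : 𝒳 × H => Ufn B p.2 p.1) := by
  have hBq : ∀ r : ℝ, MeasurableSet {p : 𝒳 × H | p.1 ∈ B p.2 r} := fun r =>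
    (measurable_fst.prodMk (measurable_snd.prodMk measurable_const)) hBmeas
  apply measurable_of_Iio
  intro c
  have hset : (fun p : 𝒳 × H => Ufn B p.2 p.1) ⁻¹' Set.Iio c =
      ⋃ q : ℚ, {p : 𝒳 × H |
        (q:ℝ) < c ∧ (1 ≤ (q:ℝ) ∨ (p.1 ∈ B p.2 (q:ℝ) ∧ (q:ℝ) ≤ 1))} := by
    ext ⟨x, h⟩
    simp only [Set.mem_preimage, Set.mem_Iio, Set.mem_iUnion, Set.mem_setOf_eq]
    constructor
    · intro hlt
      obtain ⟨m, hm, hmc⟩ :=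
        (csInf_lt_iff (Uset_bdd hB0 hBmono h x) (Uset_nonempty h x)).1 hlt
      rcases hm with hm | hm
      · obtain ⟨q, hq1, hq2⟩ := exists_rat_btwn hmc
        by_cases hql : (q:ℝ) ≤ 1
        · exact ⟨q, hq2, Or.inr ⟨hBmono h m q hq1.le hm.1, hql⟩⟩
        · exact ⟨q, hq2, Or.inl (by linarith)⟩
      · simp only [Set.mem_singleton_iff] at hm
        subst hm
        obtain ⟨q, hq1, hq2⟩ := exists_rat_btwn hmc
        exact ⟨q, hq2, Or.inl hq1.le⟩
    · rintro ⟨q, hqc, hq | hq⟩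
      · have h1 : Ufn B h x ≤ 1 :=
          csInf_le (Uset_bdd hB0 hBmono h x) (Or.inr rfl)
        linarith
      · exact lt_of_le_of_lt (Ufn_le hB0 hBmono hq.1 hq.2) hqc
  rw [hset]
  refine MeasurableSet.iUnion fun q => ?_
  by_cases h1 : (q:ℝ) < c
  · by_cases h2 : 1 ≤ (q:ℝ)
    · simp [h1, h2]
    · have h3 : (q:ℝ) ≤ 1 := by linarith
      have : {p : 𝒳 × H |
          (q:ℝ) < c ∧ (1 ≤ (q:ℝ) ∨ (p.1 ∈ B p.2 (q:ℝ) ∧ (q:ℝ) ≤ 1))} =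
          {p : 𝒳 × H | p.1 ∈ B p.2 (q:ℝ)} := by
        ext p; simp [h1, h2, h3]
      rw [this]; exact hBq q
  · have : {p : 𝒳 × H |
        (q:ℝ) < c ∧ (1 ≤ (q:ℝ) ∨ (p.1 ∈ B p.2 (q:ℝ) ∧ (q:ℝ) ≤ 1))} = ∅ := by
      ext p; simp [h1]
    rw [this]; exact MeasurableSet.empty

end U

/-- `β(t) = ∫_{(0,t]} u dγ(u)` -/
noncomputable def betafn (γ : Measure ℝ) (t : ℝ) : ℝ := ∫ u in Set.Ioc 0 t, u ∂γ

section beta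

variable (γ : Measure ℝ) [IsFiniteMeasure γ]

theorem betafn_integrableOn (t : ℝ) :
    IntegrableOn (fun u : ℝ => u) (Set.Ioc 0 t) γ := by
  refine Measure.integrableOn_of_bounded (M := max t 0) (measure_ne_top _ _)
    aestronglyMeasurable_id ?_
  refine (ae_restrict_iff' measurableSet_Ioc).2 (ae_of_all _ fun u hu => ?_)
  rw [Real.norm_eq_abs, abs_of_pos hu.1]
  exact le_trans hu.2 (le_max_left _ _)

theorem betafn_mono : Monotone (betafn γ) := fun s t hst =>
  setIntegral_mono_set (betafn_integrableOn γ t)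
    ((ae_restrict_iff' measurableSet_Ioc).2 (ae_of_all _ fun u hu => hu.1.le))
    (HasSubset.Subset.eventuallyLE (Set.Ioc_subset_Ioc_right hst))

theorem betafn_nonneg (t : ℝ) : 0 ≤ betafn γ t :=
  setIntegral_nonneg measurableSet_Ioc fun u hu => hu.1.le

theorem betafn_measurable : Measurable (betafn γ) := (betafn_mono γ).measurable

theorem betafn_ofReal (t : ℝ) :
    ENNReal.ofReal (betafn γ t) = ∫⁻ u in Set.Ioc 0 t, ENNReal.ofReal u ∂γ :=
  ofReal_integral_eq_lintegral_ofReal (betafn_integrableOn γ t)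
    ((ae_restrict_iff' measurableSet_Ioc).2 (ae_of_all _ fun u hu => hu.1.le))

theorem beta_layer [IsProbabilityMeasure γ] :
    ∫⁻ r in Set.Ioi (0:ℝ), ENNReal.ofReal (betafn γ r⁻¹) ≤ 1 := by
  have hmeas : Measurable fun p : ℝ × ℝ =>
      (if 0 < p.2 ∧ p.2 ≤ p.1⁻¹ then ENNReal.ofReal p.2 else 0) := by
    refine Measurable.ite ?_ (ENNReal.measurable_ofReal.comp measurable_snd)
      measurable_const
    exact (measurableSet_lt measurable_const measurable_snd).inter
      (measurableSet_le measurable_snd measurable_fst.inv)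
  have step1 : ∫⁻ r in Set.Ioi (0:ℝ), ENNReal.ofReal (betafn γ r⁻¹) =
      ∫⁻ r in Set.Ioi (0:ℝ), ∫⁻ u, (if 0 < u ∧ u ≤ r⁻¹ then ENNReal.ofReal u else 0) ∂γ := by
    refine lintegral_congr fun r => ?_
    rw [betafn_ofReal γ r⁻¹, ← lintegral_indicator measurableSet_Ioc]
    refine lintegral_congr fun u => ?_
    by_cases hu : u ∈ Set.Ioc (0:ℝ) r⁻¹
    · rw [Set.indicator_of_mem hu, if_pos (Set.mem_Ioc.1 hu)]
    · rw [Set.indicator_of_notMem hu, if_neg (fun hc => hu (Set.mem_Ioc.2 hc))]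
  have step2 : ∫⁻ r in Set.Ioi (0:ℝ),
        ∫⁻ u, (if 0 < u ∧ u ≤ r⁻¹ then ENNReal.ofReal u else 0) ∂γ =
      ∫⁻ u, (∫⁻ r in Set.Ioi (0:ℝ),
        (if 0 < u ∧ u ≤ r⁻¹ then ENNReal.ofReal u else 0)) ∂γ := by
    exact lintegral_lintegral_swap
      (f := fun r u => if 0 < u ∧ u ≤ r⁻¹ then ENNReal.ofReal u else 0)
      hmeas.aemeasurable
  have step3 : ∀ u : ℝ, (∫⁻ r in Set.Ioi (0:ℝ),
      (if 0 < u ∧ u ≤ r⁻¹ then ENNReal.ofReal u else 0)) ≤ 1 := by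
    intro u
    by_cases hu : 0 < u
    · have heq : ∀ r ∈ Set.Ioi (0:ℝ),
          (if 0 < u ∧ u ≤ r⁻¹ then ENNReal.ofReal u else 0) =
          (Set.Ioc (0:ℝ) u⁻¹).indicator (fun _ => ENNReal.ofReal u) r := by
        intro r hr
        rw [Set.mem_Ioi] at hr
        by_cases hru : r ≤ u⁻¹
        · have hcond : 0 < u ∧ u ≤ r⁻¹ := ⟨hu, (le_inv_comm₀ hu hr).2 hru⟩
          rw [Set.indicator_of_mem (Set.mem_Ioc.2 ⟨hr, hru⟩), if_pos hcond]
        · rw [Set.indicator_of_notMem (by simp [hru, hr])]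
          rw [if_neg]
          rintro ⟨-, hle⟩
          exact hru ((le_inv_comm₀ hr hu).2 hle)
      rw [setLIntegral_congr_fun measurableSet_Ioi heq,
        lintegral_indicator_const measurableSet_Ioc,
        Measure.restrict_apply measurableSet_Ioc,
        Set.inter_eq_left.mpr (Set.Ioc_subset_Ioi_self), Real.volume_Ioc]
      rw [← ENNReal.ofReal_mul hu.le]
      simp [mul_inv_cancel₀ hu.ne']
    · simp only [hu, false_and, if_false]
      simp
  calc ∫⁻ r in Set.Ioi (0:ℝ), ENNReal.ofReal (betafn γ r⁻¹)
      = ∫⁻ u, (∫⁻ r in Set.Ioi (0:ℝ),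
        (if 0 < u ∧ u ≤ r⁻¹ then ENNReal.ofReal u else 0)) ∂γ := by
        rw [step1, step2]
    _ ≤ ∫⁻ _, 1 ∂γ := lintegral_mono step3
    _ = 1 := by simp

end beta

theorem sup_rat {t : ℝ} (ht : 0 < t) :
    (ENNReal.ofReal t)⁻¹ ≤
      ⨆ q : ℚ, if t < (q:ℝ) then ENNReal.ofReal (1/(q:ℝ)) else 0 := by
  refine ENNReal.le_of_forall_nnreal_lt fun r hr => ?_
  rcases eq_or_lt_of_le (zero_le : (0:NNReal) ≤ r) with hr0 | hr0
  · simp [← hr0]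
  · rw [← ENNReal.ofReal_inv_of_pos ht] at hr
    have hrt : (r:ℝ) < t⁻¹ := by
      rw [← ENNReal.ofReal_coe_nnreal] at hr
      exact (ENNReal.ofReal_lt_ofReal_iff (by positivity)).1 hr
    have hr0' : (0:ℝ) < r := hr0
    have htr : t < (r:ℝ)⁻¹ := (lt_inv_comm₀ hr0' ht).1 hrt
    obtain ⟨q, hq1, hq2⟩ := exists_rat_btwn htr
    have hq0 : (0:ℝ) < q := ht.trans hq1
    have hrq : (r:ℝ) ≤ 1/(q:ℝ) := by
      rw [one_div]
      exact ((lt_inv_comm₀ hq0 hr0').1 hq2).le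
    calc (r : ℝ≥0∞) = ENNReal.ofReal (r:ℝ) := ENNReal.ofReal_coe_nnreal.symm
      _ ≤ ENNReal.ofReal (1/(q:ℝ)) := ENNReal.ofReal_le_ofReal hrq
      _ = (if t < (q:ℝ) then ENNReal.ofReal (1/(q:ℝ)) else 0) := (if_pos hq1).symm
      _ ≤ _ := le_iSup (fun q : ℚ => if t < (q:ℝ) then ENNReal.ofReal (1/(q:ℝ)) else 0) q


end OccamAux
open MeasureTheory
open scoped Classical ENNReal
set_option linter.unusedSectionVars false
namespace OccamAuxT
variable {𝒳 : Type*} [MeasurableSpace 𝒳] {H : Type*} [MeasurableSpace H]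
open OccamAux

theorem key (P : Measure 𝒳) [IsProbabilityMeasure P]
    {B : H → ℝ → Set 𝒳}
    (hBprob : ∀ (h : H) (t : ℝ), 0 ≤ t → t ≤ 1 → P (B h t) ≤ ENNReal.ofReal t)
    (hB0 : ∀ h : H, B h 0 = ∅)
    (hBmono : ∀ (h : H) (t t' : ℝ), t ≤ t' → B h t ⊆ B h t')
    (γ : Measure ℝ) [IsProbabilityMeasure γ]
    {a : ℝ} (ha : 0 ≤ a) (h : H) (hU : Measurable (fun x => Ufn B h x)) :
    ∫⁻ x, (⨆ q : ℚ, if 0 < (q:ℝ) ∧ Ufn B h x ≤ a * betafn γ (q:ℝ)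
        then ENNReal.ofReal (1/(q:ℝ)) else 0) ∂P ≤ ENNReal.ofReal a := by
  have hmeas : Measurable fun p : 𝒳 × ℝ =>
      (if Ufn B h p.1 ≤ a * betafn γ p.2⁻¹ then (1:ℝ≥0∞) else 0) := by
    refine Measurable.ite ?_ measurable_const measurable_const
    exact measurableSet_le (hU.comp measurable_fst)
      (measurable_const.mul ((betafn_measurable γ).comp measurable_snd.inv))
  -- Step A : pointwise bound by a layer-cake integral
  have stepA : ∀ x : 𝒳,
      (⨆ q : ℚ, if 0 < (q:ℝ) ∧ Ufn B h x ≤ a * betafn γ (q:ℝ)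
          then ENNReal.ofReal (1/(q:ℝ)) else 0) ≤
      ∫⁻ r in Set.Ioi (0:ℝ), (if Ufn B h x ≤ a * betafn γ r⁻¹ then 1 else 0) := by
    intro x
    refine iSup_le fun q => ?_
    split_ifs with hq
    · obtain ⟨hq0, hqU⟩ := hq
      have hptwise : ∀ r : ℝ,
          (Set.Ioc (0:ℝ) (q:ℝ)⁻¹).indicator (fun _ => (1:ℝ≥0∞)) r ≤
          (if Ufn B h x ≤ a * betafn γ r⁻¹ then 1 else 0) := by
        intro r
        by_cases hr : r ∈ Set.Ioc (0:ℝ) (q:ℝ)⁻¹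
        · have hqr : (q:ℝ) ≤ r⁻¹ := (le_inv_comm₀ hq0 hr.1).2 hr.2
          have : Ufn B h x ≤ a * betafn γ r⁻¹ :=
            hqU.trans (mul_le_mul_of_nonneg_left (betafn_mono γ hqr) ha)
          rw [Set.indicator_of_mem hr, if_pos this]
        · rw [Set.indicator_of_notMem hr]
          exact zero_le
      calc ENNReal.ofReal (1/(q:ℝ))
          = ∫⁻ r in Set.Ioi (0:ℝ),
              (Set.Ioc (0:ℝ) (q:ℝ)⁻¹).indicator (fun _ => (1:ℝ≥0∞)) r := by
            rw [lintegral_indicator_const measurableSet_Ioc,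
              Measure.restrict_apply measurableSet_Ioc,
              Set.inter_eq_left.mpr Set.Ioc_subset_Ioi_self, Real.volume_Ioc,
              one_mul, one_div]
            norm_num
        _ ≤ _ := lintegral_mono hptwise
    · exact zero_le
  calc ∫⁻ x, (⨆ q : ℚ, if 0 < (q:ℝ) ∧ Ufn B h x ≤ a * betafn γ (q:ℝ)
          then ENNReal.ofReal (1/(q:ℝ)) else 0) ∂P
      ≤ ∫⁻ x, (∫⁻ r in Set.Ioi (0:ℝ),
          (if Ufn B h x ≤ a * betafn γ r⁻¹ then 1 else 0)) ∂P :=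
        lintegral_mono stepA
    _ = ∫⁻ r in Set.Ioi (0:ℝ), (∫⁻ x,
          (if Ufn B h x ≤ a * betafn γ r⁻¹ then 1 else 0) ∂P) := by
        exact lintegral_lintegral_swap
          (f := fun x r => if Ufn B h x ≤ a * betafn γ r⁻¹ then 1 else 0)
          hmeas.aemeasurable
    _ ≤ ∫⁻ r in Set.Ioi (0:ℝ), ENNReal.ofReal (a * betafn γ r⁻¹) := by
        refine lintegral_mono fun r => ?_
        have hset : (fun x => if Ufn B h x ≤ a * betafn γ r⁻¹ then (1:ℝ≥0∞) else 0) =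
            fun x => ({x | Ufn B h x ≤ a * betafn γ r⁻¹}).indicator (fun _ => 1) x := by
          funext x
          simp [Set.indicator_apply, Set.mem_setOf_eq]
        rw [hset, lintegral_indicator_const (measurableSet_le hU measurable_const), one_mul]
        exact Ufn_tail hB0 hBmono P hBprob h (mul_nonneg ha (betafn_nonneg γ _))
    _ = ENNReal.ofReal a * ∫⁻ r in Set.Ioi (0:ℝ), ENNReal.ofReal (betafn γ r⁻¹) := by
        simp_rw [ENNReal.ofReal_mul ha]
        exact lintegral_const_mul' _ _ ENNReal.ofReal_ne_top
    _ ≤ ENNReal.ofReal a * 1 := mul_le_mul_right (beta_layer γ) _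
    _ = ENNReal.ofReal a := mul_one _

end OccamAuxT

open OccamAux in
set_option maxHeartbeats 1000000 in
/-- **Occam's hammer for set outputs.**
Pose Assumption (A') (bad events `B h t` with `P(B h t) ≤ t` for `t ∈ [0,1]`, jointly
measurable, `B h 0 = ∅`, nondecreasing in the level). Let `μ` be a reference measure on
the pool `H`, `π` a probability density w.r.t. `μ`, `γ` a probability distribution on
`(0,∞)`, and `β(s) = ∫_(0,s] u dγ(u)`. Then for any algorithm `x ↦ A x` returning a
(bimeasurable) subset of `H`, with level function `Δ(h,s) = min(δ·π(h)·β(s), 1)` the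
expected false prediction rate
`ρ_Δ(x, A x) = μ(A x ∩ {h | x ∈ B(h, Δ(h, |A x|))}) / μ(A x)` (set to `0` when
`μ (A x)` is `0` or `∞`) is at most `δ`. -/
theorem occam_hammer_set_output
    {𝒳 : Type*} [MeasurableSpace 𝒳] {H : Type*} [MeasurableSpace H]
    (P : Measure 𝒳) [IsProbabilityMeasure P]
    (B : H → ℝ → Set 𝒳)
    (hBprob : ∀ (h : H) (t : ℝ), 0 ≤ t → t ≤ 1 → P (B h t) ≤ ENNReal.ofReal t)
    (hBmeas : MeasurableSet {p : 𝒳 × H × ℝ | p.1 ∈ B p.2.1 p.2.2})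
    (hB0 : ∀ h : H, B h 0 = ∅)
    (hBmono : ∀ (h : H) (t t' : ℝ), t ≤ t' → B h t ⊆ B h t')
    (δ : ℝ) (hδ0 : 0 ≤ δ) (hδ1 : δ ≤ 1)
    (μ : Measure H)
    (π : H → ℝ) (hπmeas : Measurable π) (hπnn : ∀ h, 0 ≤ π h)
    (hπdens : ∫⁻ h, ENNReal.ofReal (π h) ∂μ = 1)
    (γ : Measure ℝ) [IsProbabilityMeasure γ] (hγ : γ (Set.Iic 0) = 0)
    (A : 𝒳 → Set H) (hAmeas : MeasurableSet {p : 𝒳 × H | p.2 ∈ A p.1}) :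
    ∫⁻ x, (if μ (A x) = 0 ∨ μ (A x) = ⊤ then 0
        else μ (A x ∩ {h : H | x ∈ B h
            (min (δ * π h * ∫ u in Set.Ioc 0 ((μ (A x)).toReal), u ∂γ) 1)}) / μ (A x)) ∂P
      ≤ ENNReal.ofReal δ := by
  classical
  have hπset : MeasurableSet {h : H | 0 < π h} := measurableSet_lt measurable_const hπmeas
  set ν : Measure H := μ.restrict {h | 0 < π h} with hν
  -- σ-finiteness of the restricted reference measure
  haveI : SigmaFinite ν := by
    refine ⟨⟨⟨fun n => {h | π h ≤ 0 ∨ 1/(n+1:ℝ) < π h}, fun _ => trivial,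
      fun n => ?_, ?_⟩⟩⟩
    · have hsplit : {h | π h ≤ 0 ∨ 1/(n+1:ℝ) < π h} ⊆
          {h | π h ≤ 0} ∪ {h | 1/(n+1:ℝ) < π h} := fun h hh => hh
      refine lt_of_le_of_lt ((measure_mono hsplit).trans (measure_union_le _ _)) ?_
      have h1 : ν {h | π h ≤ 0} = 0 := by
        rw [hν, Measure.restrict_apply (measurableSet_le hπmeas measurable_const)]
        have : {h | π h ≤ 0} ∩ {h | 0 < π h} = ∅ := by
          ext h; simp only [Set.mem_inter_iff, Set.mem_setOf_eq,
            Set.mem_empty_iff_false, iff_false]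
          rintro ⟨h1, h2⟩; exact absurd h2 (not_lt.2 h1)
        rw [this, measure_empty]
      have h2 : ν {h | 1/(n+1:ℝ) < π h} < ⊤ := by
        have hee : (0:ℝ) < 1/(n+1:ℝ) := by positivity
        have hsub2 : {h | 1/(n+1:ℝ) < π h} ⊆
            {h | ENNReal.ofReal (1/(n+1:ℝ)) ≤ ENNReal.ofReal (π h)} :=
          fun h hh => ENNReal.ofReal_le_ofReal (le_of_lt hh)
        calc ν {h | 1/(n+1:ℝ) < π h} ≤ μ {h | 1/(n+1:ℝ) < π h} :=
              Measure.restrict_apply_le _ _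
          _ ≤ μ {h | ENNReal.ofReal (1/(n+1:ℝ)) ≤ ENNReal.ofReal (π h)} :=
              measure_mono hsub2
          _ ≤ (∫⁻ h, ENNReal.ofReal (π h) ∂μ) / ENNReal.ofReal (1/(n+1:ℝ)) :=
              meas_ge_le_lintegral_div (ENNReal.measurable_ofReal.comp hπmeas).aemeasurable
                (by simp only [ne_eq, ENNReal.ofReal_eq_zero, not_le]; positivity) ENNReal.ofReal_ne_top
          _ < ⊤ := by
              rw [hπdens]
              exact ENNReal.div_lt_top (by simp)
                (by simp only [ne_eq, ENNReal.ofReal_eq_zero, not_le]; positivity)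
      calc ν {h | π h ≤ 0} + ν {h | 1/(n+1:ℝ) < π h} = ν {h | 1/(n+1:ℝ) < π h} := by
            rw [h1, zero_add]
        _ < ⊤ := h2
    · ext h
      simp only [Set.mem_iUnion, Set.mem_setOf_eq, Set.mem_univ, iff_true]
      by_cases hh : π h ≤ 0
      · exact ⟨0, Or.inl hh⟩
      · push_neg at hh
        obtain ⟨n, hn⟩ := exists_nat_one_div_lt hh
        exact ⟨n, Or.inr hn⟩
  have hUmeas := Ufn_measurable hB0 hBmono hBmeas
  -- the weight function
  set W : 𝒳 × H → ℝ≥0∞ := fun p => if p.2 ∈ A p.1 then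
      (⨆ q : ℚ, if 0 < (q:ℝ) ∧ Ufn B p.2 p.1 ≤ δ * π p.2 * betafn γ (q:ℝ)
        then ENNReal.ofReal (1/(q:ℝ)) else 0) else 0 with hWdef
  have hWmeas : Measurable W := by
    refine Measurable.ite hAmeas ?_ measurable_const
    refine Measurable.iSup fun q => ?_
    refine Measurable.ite ?_ measurable_const measurable_const
    exact (MeasurableSet.const _).inter
      (measurableSet_le hUmeas
        ((measurable_const.mul (hπmeas.comp measurable_snd)).mul measurable_const))
  -- pointwise bound of the false prediction rate
  have hle : ∀ x, (if μ (A x) = 0 ∨ μ (A x) = ⊤ then 0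
      else μ (A x ∩ {h : H | x ∈ B h
          (min (δ * π h * ∫ u in Set.Ioc 0 ((μ (A x)).toReal), u ∂γ) 1)}) / μ (A x))
      ≤ ∫⁻ h, W (x, h) ∂ν := by
    intro x
    split_ifs with h0
    · exact zero_le
    push_neg at h0
    obtain ⟨hs0, hstop⟩ := h0
    have ht : 0 < (μ (A x)).toReal := ENNReal.toReal_pos hs0 hstop
    set t := (μ (A x)).toReal with htdef
    set Cx : Set H := {h | x ∈ B h (min (δ * π h * betafn γ t) 1)} with hCxdef
    show μ (A x ∩ Cx) / μ (A x) ≤ _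
    have hA : MeasurableSet (A x) := (measurable_const.prodMk measurable_id) hAmeas
    have hC : MeasurableSet Cx := by
      have hmap : Measurable fun h : H => (x, h, min (δ * π h * betafn γ t) 1) :=
        measurable_const.prodMk (measurable_id.prodMk
          (((measurable_const.mul hπmeas).mul_const _).min measurable_const))
      exact hmap hBmeas
    have hsub : A x ∩ Cx ⊆ {h | 0 < π h} := by
      rintro h ⟨hhA, hhC⟩
      by_contra hng
      have hπ0 : π h = 0 := le_antisymm (not_lt.1 hng) (hπnn h)
      have hmin : min (δ * π h * betafn γ t) 1 = 0 := by
        rw [hπ0]; simp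
      rw [hCxdef] at hhC
      simp only [Set.mem_setOf_eq, hmin, hB0 h] at hhC
      exact hhC
    have hμν : μ (A x ∩ Cx) = ν (A x ∩ Cx) := by
      rw [hν, Measure.restrict_apply' hπset, Set.inter_eq_left.mpr hsub]
    have hpt : ∀ h ∈ A x ∩ Cx, (μ (A x))⁻¹ ≤
        ⨆ q : ℚ, if 0 < (q:ℝ) ∧ Ufn B h x ≤ δ * π h * betafn γ (q:ℝ)
          then ENNReal.ofReal (1/(q:ℝ)) else 0 := by
      rintro h ⟨hhA, hhC⟩
      have hxB : x ∈ B h (min (δ * π h * betafn γ t) 1) := hhC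
      have hUle : Ufn B h x ≤ δ * π h * betafn γ t :=
        le_trans (Ufn_le hB0 hBmono hxB (min_le_right _ _)) (min_le_left _ _)
      calc (μ (A x))⁻¹ = (ENNReal.ofReal t)⁻¹ := by rw [htdef, ENNReal.ofReal_toReal hstop]
        _ ≤ ⨆ q : ℚ, if t < (q:ℝ) then ENNReal.ofReal (1/(q:ℝ)) else 0 := sup_rat ht
        _ ≤ _ := by
            refine iSup_mono fun q => ?_
            by_cases h1 : t < (q:ℝ)
            · rw [if_pos h1, if_pos ⟨ht.trans h1, hUle.trans
                (mul_le_mul_of_nonneg_left (betafn_mono γ h1.le)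
                  (mul_nonneg hδ0 (hπnn h)))⟩]
            · rw [if_neg h1]; exact zero_le
    calc μ (A x ∩ Cx) / μ (A x) = ν (A x ∩ Cx) * (μ (A x))⁻¹ := by
          rw [hμν, div_eq_mul_inv]
      _ = ∫⁻ h, (A x ∩ Cx).indicator (fun _ => (μ (A x))⁻¹) h ∂ν := by
          rw [lintegral_indicator_const (hA.inter hC), mul_comm]
      _ ≤ ∫⁻ h, W (x, h) ∂ν := by
          refine lintegral_mono fun h => ?_
          by_cases hh : h ∈ A x ∩ Cx
          · rw [Set.indicator_of_mem hh, hWdef]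
            simp only [if_pos hh.1]
            exact hpt h hh
          · rw [Set.indicator_of_notMem hh]; exact zero_le
  calc ∫⁻ x, (if μ (A x) = 0 ∨ μ (A x) = ⊤ then 0
        else μ (A x ∩ {h : H | x ∈ B h
            (min (δ * π h * ∫ u in Set.Ioc 0 ((μ (A x)).toReal), u ∂γ) 1)}) / μ (A x)) ∂P
      ≤ ∫⁻ x, (∫⁻ h, W (x, h) ∂ν) ∂P := lintegral_mono hle
    _ = ∫⁻ h, (∫⁻ x, W (x, h) ∂P) ∂ν :=
        lintegral_lintegral_swap (f := fun x h => W (x, h)) hWmeas.aemeasurable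
    _ ≤ ∫⁻ h, ENNReal.ofReal (δ * π h) ∂ν := by
        refine lintegral_mono fun h => ?_
        calc ∫⁻ x, W (x, h) ∂P
            ≤ ∫⁻ x, (⨆ q : ℚ, if 0 < (q:ℝ) ∧ Ufn B h x ≤ δ * π h * betafn γ (q:ℝ)
              then ENNReal.ofReal (1/(q:ℝ)) else 0) ∂P := by
              refine lintegral_mono fun x => ?_
              simp only [hWdef]
              split_ifs
              exacts [le_refl _, zero_le]
          _ ≤ ENNReal.ofReal (δ * π h) :=
              OccamAuxT.key P hBprob hB0 hBmono γ (mul_nonneg hδ0 (hπnn h)) h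
                (hUmeas.comp (measurable_id.prodMk measurable_const))
    _ = ENNReal.ofReal δ * ∫⁻ h, ENNReal.ofReal (π h) ∂ν := by
        simp_rw [ENNReal.ofReal_mul hδ0]
        exact lintegral_const_mul' _ _ ENNReal.ofReal_ne_top
    _ = ENNReal.ofReal δ * 1 := by
        congr 1
        rw [hν]
        calc ∫⁻ h, ENNReal.ofReal (π h) ∂(μ.restrict {h | 0 < π h})
            = ∫⁻ h, ({h : H | 0 < π h}).indicator (fun h => ENNReal.ofReal (π h)) h ∂μ :=
              (lintegral_indicator hπset _).symm
          _ = ∫⁻ h, ENNReal.ofReal (π h) ∂μ := by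
              refine lintegral_congr fun h => ?_
              by_cases hh : h ∈ {h : H | 0 < π h}
              · rw [Set.indicator_of_mem hh]
              · rw [Set.indicator_of_notMem hh]
                have : π h = 0 := le_antisymm (not_lt.1 hh) (hπnn h)
                simp [this]
          _ = 1 := hπdens
    _ = ENNReal.ofReal δ := mul_one _
end

section
/- Let δ ∈ [0,1]. Pose Assumption (A). Let μ be a nonnegative measure on ℋ, π a probability density function with respect to μ, (a_k)_{k≥1} a decreasing sequence of positive reals converging to zero, and (γ_k)_{k≥1} nonnegative weights with Σ_k γ_k ≤ 1. Define the level function Δ by Δ(h,s) = min(δ·π(h)·a_k·γ_k, 1) whenever s ∈ [a_k, a_{k-1}) (with a_0 = +∞), and Δ(h,0)=0. Then for any algorithm X ↦ A_X ⊆ ℋ with (X,h) ↦ 1{h ∈ A_X} bimeasurable, the expectation over X ~ P of the false prediction rate ρ_Δ(X, A_X) is at most δ. -/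
open MeasureTheory Filter
open scoped Classical ENNReal Topology

/-- **The "naive" discretization strategy.**
Pose Assumption (A). Let `μ` be a volume measure on the pool `H`, `π` a probability density
w.r.t. `μ`, `a k` (for `k = 0, 1, …`, standing for the paper's `a_1, a_2, …`, with the
convention `a_0 = +∞`) a decreasing sequence of positive reals converging to `0`, and
`γ k` nonnegative weights of total mass at most `1`. Let `Δ` be the (jointly measurable)
level function with `Δ(h,s) = min(δ·π(h)·a_k·γ_k, 1)` whenever `s ∈ [a_k, a_{k-1})` and
`Δ(h,s) = 0` for `s ≤ 0`. Then for any algorithm `x ↦ A x` returning a (bimeasurable)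
subset of `H`, the expected false prediction rate
`ρ_Δ(x, A x) = μ(A x ∩ {h | x ∈ B(h, Δ(h, |A x|))}) / μ(A x)` (set to `0` when
`μ (A x)` is `0` or `∞`) is at most `δ`. -/
theorem occam_hammer_naive_discretization
    {𝒳 : Type*} [MeasurableSpace 𝒳] {H : Type*} [MeasurableSpace H]
    (P : Measure 𝒳) [IsProbabilityMeasure P]
    (B : H → ℝ → Set 𝒳)
    (hBprob : ∀ (h : H) (t : ℝ), 0 ≤ t → t ≤ 1 → P (B h t) ≤ ENNReal.ofReal t)
    (hBmeas : MeasurableSet {p : 𝒳 × H × ℝ | p.1 ∈ B p.2.1 p.2.2})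
    (hB0 : ∀ h : H, B h 0 = ∅)
    (δ : ℝ) (hδ0 : 0 ≤ δ) (hδ1 : δ ≤ 1)
    (μ : Measure H)
    (π : H → ℝ) (hπmeas : Measurable π) (hπnn : ∀ h, 0 ≤ π h)
    (hπdens : ∫⁻ h, ENNReal.ofReal (π h) ∂μ = 1)
    (a : ℕ → ℝ) (ha_pos : ∀ k, 0 < a k) (ha_anti : StrictAnti a)
    (ha_lim : Tendsto a atTop (𝓝 0))
    (γ : ℕ → ℝ) (hγnn : ∀ k, 0 ≤ γ k)
    (hγsum : ∑' k, ENNReal.ofReal (γ k) ≤ 1)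
    (Δ : H → ℝ → ℝ) (hΔmeas : Measurable (Function.uncurry Δ))
    (hΔrange : ∀ h s, 0 ≤ Δ h s ∧ Δ h s ≤ 1)
    (hΔtop : ∀ h s, a 0 ≤ s → Δ h s = min (δ * π h * (a 0 * γ 0)) 1)
    (hΔk : ∀ h s k, a (k + 1) ≤ s → s < a k →
      Δ h s = min (δ * π h * (a (k + 1) * γ (k + 1))) 1)
    (hΔ0 : ∀ h s, s ≤ 0 → Δ h s = 0)
    (A : 𝒳 → Set H) (hAmeas : MeasurableSet {p : 𝒳 × H | p.2 ∈ A p.1}) :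
    ∫⁻ x, (if μ (A x) = 0 ∨ μ (A x) = ⊤ then 0
        else μ (A x ∩ {h : H | x ∈ B h (Δ h ((μ (A x)).toReal))}) / μ (A x)) ∂P
      ≤ ENNReal.ofReal δ := by
  classical
  set S : Set H := {h | 0 < π h} with hSdef
  have hSmeas : MeasurableSet S := measurableSet_lt measurable_const hπmeas
  set ν : Measure H := μ.restrict S with hνdef
  -- σ-finiteness of the restriction
  haveI : SigmaFinite ν := by
    refine ⟨⟨⟨fun n => {h | ((n : ℝ) + 1)⁻¹ ≤ π h} ∪ {h | π h ≤ 0},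
      fun _ => trivial, ?_, ?_⟩⟩⟩
    · intro n
      have hsub : ({h | ((n : ℝ) + 1)⁻¹ ≤ π h} ∪ {h | π h ≤ 0}) ∩ S
          ⊆ {h | ENNReal.ofReal (((n : ℝ) + 1)⁻¹) ≤ ENNReal.ofReal (π h)} := by
        rintro h ⟨hm, hpos⟩
        simp only [hSdef, Set.mem_setOf_eq] at hpos
        rcases hm with hm | hm
        · exact ENNReal.ofReal_le_ofReal hm
        · simp only [Set.mem_setOf_eq] at hm
          exact absurd hm (not_le.2 hpos)
      have hmarkov := mul_meas_ge_le_lintegral₀ (μ := μ)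
        (hπmeas.ennreal_ofReal.aemeasurable) (ENNReal.ofReal (((n : ℝ) + 1)⁻¹))
      rw [hπdens] at hmarkov
      have hε : ENNReal.ofReal (((n : ℝ) + 1)⁻¹) ≠ 0 := by
        rw [Ne, ENNReal.ofReal_eq_zero, not_le]
        positivity
      have hfin : μ {h | ENNReal.ofReal (((n : ℝ) + 1)⁻¹) ≤ ENNReal.ofReal (π h)} < ⊤ := by
        have hle : μ {h | ENNReal.ofReal (((n : ℝ) + 1)⁻¹) ≤ ENNReal.ofReal (π h)}
            ≤ (ENNReal.ofReal (((n : ℝ) + 1)⁻¹))⁻¹ :=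
          ENNReal.le_inv_iff_mul_le.2 (by rwa [mul_comm])
        exact hle.trans_lt (ENNReal.inv_lt_top.2 (pos_iff_ne_zero.2 hε))
      rw [hνdef, Measure.restrict_apply' hSmeas]
      exact (measure_mono hsub).trans_lt hfin
    · rw [Set.eq_univ_iff_forall]
      intro h
      rcases lt_or_ge 0 (π h) with hp | hp
      · obtain ⟨n, hn⟩ := exists_nat_gt (π h)⁻¹
        refine Set.mem_iUnion.2 ⟨n, Or.inl ?_⟩
        have h1 : (π h)⁻¹ < (n : ℝ) + 1 := hn.trans (lt_add_one _)
        have := inv_strictAnti₀ (inv_pos.2 hp) h1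
        rw [inv_inv] at this
        exact this.le
      · exact Set.mem_iUnion.2 ⟨0, Or.inr hp⟩
  -- the discretized level functions
  set Δf : ℕ → H → ℝ := fun k h => min (δ * π h * (a k * γ k)) 1 with hΔfdef
  have hΔf_nn : ∀ k h, 0 ≤ Δf k h := fun k h =>
    le_min (mul_nonneg (mul_nonneg hδ0 (hπnn h)) (mul_nonneg (ha_pos k).le (hγnn k)))
      zero_le_one
  have hΔf_le_one : ∀ k h, Δf k h ≤ 1 := fun k h => min_le_right _ _
  have hΔf_meas : ∀ k, Measurable (Δf k) := fun k =>
    ((measurable_const.mul hπmeas).mul_const _).min measurable_const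
  -- the relevant measurable sets in the product space
  set E : ℕ → Set (𝒳 × H) := fun k => {p : 𝒳 × H | p.1 ∈ B p.2 (Δf k p.2)} with hEdef
  have hE : ∀ k, MeasurableSet (E k) := by
    intro k
    have hg : Measurable fun p : 𝒳 × H => (p.1, p.2, Δf k p.2) :=
      measurable_fst.prodMk (measurable_snd.prodMk ((hΔf_meas k).comp measurable_snd))
    exact hBmeas.preimage hg
  -- each slice lies in the support of π
  have hslice_sub : ∀ k x, {h | x ∈ B h (Δf k h)} ⊆ S := by
    intro k x h hh
    by_contra hc
    have hz : π h = 0 := le_antisymm (not_lt.1 hc) (hπnn h)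
    have hzz : Δf k h = 0 := by simp [hΔfdef, hz]
    simp only [Set.mem_setOf_eq] at hh
    rw [hzz, hB0 h] at hh
    exact hh
  set T : ℕ → 𝒳 → ℝ≥0∞ :=
    fun k x => ν {h | x ∈ B h (Δf k h)} * (ENNReal.ofReal (a k))⁻¹ with hTdef
  -- pointwise bound
  have key : ∀ x, (if μ (A x) = 0 ∨ μ (A x) = ⊤ then 0
      else μ (A x ∩ {h : H | x ∈ B h (Δ h ((μ (A x)).toReal))}) / μ (A x))
      ≤ ∑' k, T k x := by
    intro x
    by_cases hx : μ (A x) = 0 ∨ μ (A x) = ⊤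
    · rw [if_pos hx]; exact zero_le
    · rw [if_neg hx]
      push_neg at hx
      obtain ⟨h0, htop⟩ := hx
      set s : ℝ := (μ (A x)).toReal with hsdef
      have hs_pos : 0 < s := ENNReal.toReal_pos h0 htop
      have hms : μ (A x) = ENNReal.ofReal s := (ENNReal.ofReal_toReal htop).symm
      obtain ⟨κ, hκ_le, hκΔ⟩ : ∃ κ, a κ ≤ s ∧ ∀ h, Δ h s = Δf κ h := by
        by_cases hs0 : a 0 ≤ s
        · exact ⟨0, hs0, fun h => hΔtop h s hs0⟩
        · push_neg at hs0
          have hex : ∃ n, a n ≤ s := by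
            obtain ⟨n, hn⟩ := (ha_lim.eventually (gt_mem_nhds hs_pos)).exists
            exact ⟨n, hn.le⟩
          have hn : a (Nat.find hex) ≤ s := Nat.find_spec hex
          have hne : Nat.find hex ≠ 0 := by
            intro hzero
            rw [hzero] at hn
            exact absurd hn (not_le.2 hs0)
          obtain ⟨m, hm⟩ := Nat.exists_eq_succ_of_ne_zero hne
          have hlt : s < a m := lt_of_not_ge (Nat.find_min hex (by omega))
          have hn' : a (m + 1) ≤ s := by rw [hm] at hn; exact hn
          refine ⟨Nat.find hex, hn, fun h => ?_⟩
          rw [hm]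
          exact hΔk h s m hn' hlt
      have hsub2 : A x ∩ {h | x ∈ B h (Δ h s)} ⊆ {h | x ∈ B h (Δf κ h)} ∩ S := by
        intro h hh
        have hmem : x ∈ B h (Δf κ h) := by rw [← hκΔ h]; exact hh.2
        exact ⟨hmem, hslice_sub κ x hmem⟩
      have hstep : μ (A x ∩ {h | x ∈ B h (Δ h s)}) / μ (A x)
          ≤ ν {h | x ∈ B h (Δf κ h)} / ENNReal.ofReal (a κ) := by
        rw [hνdef, Measure.restrict_apply' hSmeas]
        refine ENNReal.div_le_div (measure_mono hsub2) ?_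
        rw [hms]
        exact ENNReal.ofReal_le_ofReal hκ_le
      calc μ (A x ∩ {h | x ∈ B h (Δ h s)}) / μ (A x)
          ≤ ν {h | x ∈ B h (Δf κ h)} / ENNReal.ofReal (a κ) := hstep
        _ = T κ x := by rw [hTdef, div_eq_mul_inv]
        _ ≤ ∑' k, T k x := ENNReal.le_tsum κ
  refine le_trans (lintegral_mono key) ?_
  have hTmeas : ∀ k, AEMeasurable (T k) P := by
    intro k
    have : Measurable fun x => ν (Prod.mk x ⁻¹' E k) :=
      measurable_measure_prodMk_left (hE k)
    exact (this.mul_const _).aemeasurable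
  rw [lintegral_tsum hTmeas]
  -- bound each term
  have hterm : ∀ k, ∫⁻ x, T k x ∂P
      ≤ ENNReal.ofReal (δ * (a k * γ k)) * (ENNReal.ofReal (a k))⁻¹ := by
    intro k
    have hA0 : ENNReal.ofReal (a k) ≠ 0 := (ENNReal.ofReal_pos.2 (ha_pos k)).ne'
    have hinv_ne_top : (ENNReal.ofReal (a k))⁻¹ ≠ ⊤ := ENNReal.inv_ne_top.2 hA0
    have hcnn : 0 ≤ δ * (a k * γ k) :=
      mul_nonneg hδ0 (mul_nonneg (ha_pos k).le (hγnn k))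
    have hbound : ∫⁻ x, ν {h | x ∈ B h (Δf k h)} ∂P ≤ ENNReal.ofReal (δ * (a k * γ k)) := by
      have e1 : ∫⁻ x, ν {h | x ∈ B h (Δf k h)} ∂P = (P.prod ν) (E k) :=
        (Measure.prod_apply (hE k)).symm
      rw [e1, Measure.prod_apply_symm (hE k)]
      calc ∫⁻ h, P ((fun x => (x, h)) ⁻¹' E k) ∂ν
          ≤ ∫⁻ h, ENNReal.ofReal (Δf k h) ∂ν :=
            lintegral_mono fun h => hBprob h _ (hΔf_nn k h) (hΔf_le_one k h)
        _ ≤ ∫⁻ h, ENNReal.ofReal ((δ * (a k * γ k)) * π h) ∂ν :=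
            lintegral_mono fun h => ENNReal.ofReal_le_ofReal
              ((min_le_left _ _).trans (le_of_eq (by ring)))
        _ ≤ ∫⁻ h, ENNReal.ofReal ((δ * (a k * γ k)) * π h) ∂μ :=
            lintegral_mono' Measure.restrict_le_self le_rfl
        _ = ENNReal.ofReal (δ * (a k * γ k)) * ∫⁻ h, ENNReal.ofReal (π h) ∂μ := by
            simp_rw [ENNReal.ofReal_mul hcnn]
            exact lintegral_const_mul' _ _ ENNReal.ofReal_ne_top
        _ = ENNReal.ofReal (δ * (a k * γ k)) := by rw [hπdens, mul_one]
    calc ∫⁻ x, T k x ∂P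
        = (∫⁻ x, ν {h | x ∈ B h (Δf k h)} ∂P) * (ENNReal.ofReal (a k))⁻¹ :=
          lintegral_mul_const' _ _ hinv_ne_top
      _ ≤ ENNReal.ofReal (δ * (a k * γ k)) * (ENNReal.ofReal (a k))⁻¹ :=
          mul_le_mul_left hbound _
  calc ∑' k, ∫⁻ x, T k x ∂P
      ≤ ∑' k, ENNReal.ofReal (δ * (a k * γ k)) * (ENNReal.ofReal (a k))⁻¹ :=
        ENNReal.tsum_le_tsum hterm
    _ = ∑' k, ENNReal.ofReal δ * ENNReal.ofReal (γ k) := by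
        refine tsum_congr fun k => ?_
        have hA0 : ENNReal.ofReal (a k) ≠ 0 := by
          rw [Ne, ENNReal.ofReal_eq_zero, not_le]; exact ha_pos k
        have hAt : ENNReal.ofReal (a k) ≠ ⊤ := ENNReal.ofReal_ne_top
        rw [ENNReal.ofReal_mul hδ0, ENNReal.ofReal_mul (ha_pos k).le]
        calc ENNReal.ofReal δ * (ENNReal.ofReal (a k) * ENNReal.ofReal (γ k))
              * (ENNReal.ofReal (a k))⁻¹
            = ENNReal.ofReal δ * ENNReal.ofReal (γ k)
              * (ENNReal.ofReal (a k) * (ENNReal.ofReal (a k))⁻¹) := by ring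
          _ = ENNReal.ofReal δ * ENNReal.ofReal (γ k) := by
              rw [ENNReal.mul_inv_cancel hA0 hAt, mul_one]
    _ = ENNReal.ofReal δ * ∑' k, ENNReal.ofReal (γ k) := ENNReal.tsum_mul_left
    _ ≤ ENNReal.ofReal δ * 1 := mul_le_mul_right hγsum _
    _ = ENNReal.ofReal δ := mul_one _
end

section
/- Let ℋ be a finite set of null hypotheses and α ∈ [0,1]. Let T be an increasing family of tests, and let ℋ₀ ⊆ ℋ be the set of hypotheses true under the data distribution P, so that for every h ∈ ℋ₀ and every level a ∈ [0,1], P(T(X,h,a)=1) ≤ a. Let π be a probability distribution on ℋ, γ a probability distribution on {1,…,|ℋ|}, and β(k) = Σ_{i≤k} i·γ(i). Define the step-up procedure A_X = the largest set G ⊆ ℋ such that for all h ∈ G, T(X, h, min(α·π(h)·β(|G|),1)) = 1. Then the false discovery rate of this procedure satisfies FDR(A) = E_{X~P}[ |A_X ∩ ℋ₀| / |A_X| ] ≤ π(ℋ₀)·α ≤ α (with the convention that the ratio is 0 when A_X = ∅), regardless of the dependence structure of the test statistics. -/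
open MeasureTheory
open scoped Classical ENNReal

private 
lemma tele_sum (k n : ℕ) (hkn : k ≤ n) :
    ∑ j ∈ Finset.Ico k n, ((1:ℝ)/j - 1/(j+1)) = 1/k - 1/n := by
  induction n, hkn using Nat.le_induction with
  | base => simp
  | succ n hn ih =>
      rw [Finset.sum_Ico_succ_top hn, ih]
      push_cast
      ring

lemma beta_identity (γ : ℕ → ℝ) (n : ℕ) (hn : 1 ≤ n) :
    ∑ j ∈ Finset.Ico 1 n, ((1:ℝ)/j - 1/(j+1)) * (∑ i ∈ Finset.Icc 1 j, (i:ℝ) * γ i)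
      + (1/n) * ∑ i ∈ Finset.Icc 1 n, (i:ℝ) * γ i
      = ∑ i ∈ Finset.Icc 1 n, γ i := by
  induction n, hn using Nat.le_induction with
  | base => simp
  | succ n hn ih =>
      rw [Finset.sum_Ico_succ_top hn, Finset.sum_Icc_succ_top (by omega : 1 ≤ n + 1),
        Finset.sum_Icc_succ_top (by omega : 1 ≤ n + 1)]
      have hn1 : (n:ℝ) + 1 ≠ 0 := by positivity
      have key : (1/((n:ℝ)+1)) * (((n:ℝ)+1) * γ (n+1)) = γ (n+1) := by field_simp
      push_cast
      linear_combination ih + key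

lemma beta_identity' (γ : ℕ → ℝ) (c : ℝ) (n : ℕ) (hn : 1 ≤ n) :
    ∑ j ∈ Finset.Ico 1 n, ((1:ℝ)/j - 1/(j+1)) * (c * ∑ i ∈ Finset.Icc 1 j, (i:ℝ) * γ i)
      + (1/n) * (c * ∑ i ∈ Finset.Icc 1 n, (i:ℝ) * γ i)
      = c * ∑ i ∈ Finset.Icc 1 n, γ i := by
  induction n, hn using Nat.le_induction with
  | base => simp
  | succ n hn ih =>
      rw [Finset.sum_Ico_succ_top hn, Finset.sum_Icc_succ_top (by omega : 1 ≤ n + 1),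
        Finset.sum_Icc_succ_top (by omega : 1 ≤ n + 1)]
      have hn1 : (n:ℝ) + 1 ≠ 0 := by positivity
      have key : (1/((n:ℝ)+1)) * (((n:ℝ)+1) * γ (n+1)) = γ (n+1) := by field_simp
      push_cast
      linear_combination ih + c * key

private lemma stepup_sum_bound (n : ℕ) (hn : 1 ≤ n) (q : ℕ → ℝ≥0∞) (B : ℕ → ℝ)
    (hB : ∀ K, 0 ≤ B K)
    (hq : ∀ K, K ≤ n → ∑ k ∈ Finset.Icc 1 K, q k ≤ ENNReal.ofReal (B K)) :
    ∑ k ∈ Finset.Icc 1 n, q k * (k:ℝ≥0∞)⁻¹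
      ≤ ENNReal.ofReal (∑ j ∈ Finset.Ico 1 n, ((1:ℝ)/j - 1/(j+1)) * B j + (1/n) * B n) := by
  have hδ : ∀ j : ℕ, 1 ≤ j → (0:ℝ) ≤ 1/j - 1/(j+1) := by
    intro j hj
    have h0 : (0:ℝ) < j := by exact_mod_cast hj
    have : (1:ℝ)/(j+1) ≤ 1/j := one_div_le_one_div_of_le h0 (by linarith)
    linarith
  have key : ∀ k ∈ Finset.Icc 1 n, ((k:ℝ≥0∞))⁻¹
      = (∑ j ∈ Finset.Ico k n, ENNReal.ofReal ((1:ℝ)/j - 1/(j+1))) + ENNReal.ofReal (1/n) := by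
    intro k hk
    obtain ⟨hk1, hkn⟩ := Finset.mem_Icc.mp hk
    rw [← ENNReal.ofReal_sum_of_nonneg (fun j (hj : j ∈ Finset.Ico k n) => hδ j (le_trans hk1 (Finset.mem_Ico.mp hj).1)),
      tele_sum k n hkn, ← ENNReal.ofReal_add ?h1 (by positivity), sub_add_cancel]
    · rw [one_div, ← ENNReal.ofReal_natCast k, ← ENNReal.ofReal_inv_of_pos (by exact_mod_cast hk1)]
    case h1 =>
      have h0 : (0:ℝ) < k := by exact_mod_cast hk1
      have : (1:ℝ)/n ≤ 1/k := one_div_le_one_div_of_le h0 (by exact_mod_cast hkn)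
      linarith
  calc ∑ k ∈ Finset.Icc 1 n, q k * (k:ℝ≥0∞)⁻¹
      = ∑ k ∈ Finset.Icc 1 n, ((∑ j ∈ Finset.Ico k n, q k * ENNReal.ofReal ((1:ℝ)/j - 1/(j+1)))
          + q k * ENNReal.ofReal (1/n)) := by
        refine Finset.sum_congr rfl fun k hk => ?_
        rw [key k hk, mul_add, Finset.mul_sum]
    _ = (∑ k ∈ Finset.Icc 1 n, ∑ j ∈ Finset.Ico k n, q k * ENNReal.ofReal ((1:ℝ)/j - 1/(j+1)))
          + ∑ k ∈ Finset.Icc 1 n, q k * ENNReal.ofReal (1/n) := Finset.sum_add_distrib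
    _ = (∑ j ∈ Finset.Ico 1 n, ∑ k ∈ Finset.Icc 1 j, q k * ENNReal.ofReal ((1:ℝ)/j - 1/(j+1)))
          + (∑ k ∈ Finset.Icc 1 n, q k) * ENNReal.ofReal (1/n) := by
        rw [Finset.sum_mul]
        congr 1
        refine Finset.sum_comm' ?_
        intro k j
        simp only [Finset.mem_Icc, Finset.mem_Ico]
        omega
    _ ≤ (∑ j ∈ Finset.Ico 1 n, ENNReal.ofReal (B j) * ENNReal.ofReal ((1:ℝ)/j - 1/(j+1)))
          + ENNReal.ofReal (B n) * ENNReal.ofReal (1/n) := by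
        gcongr with j hj
        · rw [← Finset.sum_mul]
          exact mul_le_mul_left (hq j (le_of_lt (Finset.mem_Ico.mp hj).2)) _
        · exact hq n le_rfl
    _ = (∑ j ∈ Finset.Ico 1 n, ENNReal.ofReal (((1:ℝ)/j - 1/(j+1)) * B j))
          + ENNReal.ofReal ((1/n) * B n) := by
        congr 1
        · refine Finset.sum_congr rfl fun j hj => ?_
          rw [ENNReal.ofReal_mul (hδ j (Finset.mem_Ico.mp hj).1), mul_comm]
        · rw [ENNReal.ofReal_mul (by positivity), mul_comm]
    _ = ENNReal.ofReal (∑ j ∈ Finset.Ico 1 n, ((1:ℝ)/j - 1/(j+1)) * B j + (1/n) * B n) := by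
        rw [ENNReal.ofReal_add (Finset.sum_nonneg fun j hj =>
            mul_nonneg (hδ j (Finset.mem_Ico.mp hj).1) (hB j)) (mul_nonneg (by positivity) (hB n)),
          ENNReal.ofReal_sum_of_nonneg (fun j hj => mul_nonneg (hδ j (Finset.mem_Ico.mp hj).1) (hB j))]


/-- **The Occam's-hammer family of step-up multiple testing procedures has
distribution-free FDR control** (Proposition 5 of the paper).
`H` is a finite pool of null hypotheses, `T x h a ∈ {0,1}` an increasing family of tests
(`true` = "rejected"), and `H0` the set of true nulls, so that each individual test has
level `a`: `P(T(X,h,a) = 1) ≤ a` for `h ∈ H0`, `a ∈ [0,1]`. Given a prior `π` on `H`, a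
prior `γ` on `{1,…,|H|}` and `β(k) = Σ_{i ≤ k} i·γ(i)`, the step-up procedure `A_X` —
the largest `G ⊆ H` with `T(X, h, min(α·π(h)·β(|G|),1)) = 1` for all `h ∈ G` — satisfies
`FDR(A) = E_X[|A_X ∩ H0| / |A_X|] ≤ π(H0)·α ≤ α` (ratio `0` when `A_X = ∅`),
regardless of the dependence structure of the test statistics. -/
theorem stepup_procedure_FDR_control
    {𝒳 : Type*} [MeasurableSpace 𝒳] {H : Type*} [Fintype H] [DecidableEq H]
    (P : Measure 𝒳) [IsProbabilityMeasure P]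
    (α : ℝ) (hα0 : 0 ≤ α) (hα1 : α ≤ 1)
    (T : 𝒳 → H → ℝ → Bool)
    (hTmeas : ∀ (h : H) (a : ℝ), MeasurableSet {x : 𝒳 | T x h a = true})
    (hTmono : ∀ (x : 𝒳) (h : H) (a a' : ℝ), a ≤ a' → T x h a = true → T x h a' = true)
    (hT0 : ∀ (x : 𝒳) (h : H), T x h 0 = false)
    (H0 : Finset H)
    (hlevel : ∀ h ∈ H0, ∀ a : ℝ, 0 ≤ a → a ≤ 1 →
      P {x : 𝒳 | T x h a = true} ≤ ENNReal.ofReal a)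
    (π : H → ℝ) (hπnn : ∀ h, 0 ≤ π h) (hπsum : ∑ h, π h = 1)
    (γ : ℕ → ℝ) (hγnn : ∀ i, 0 ≤ γ i)
    (hγsum : ∑ i ∈ Finset.Icc 1 (Fintype.card H), γ i = 1)
    (A : 𝒳 → Finset H)
    (hAself : ∀ x, ∀ h ∈ A x,
      T x h (min (α * π h * ∑ i ∈ Finset.Icc 1 (A x).card, (i : ℝ) * γ i) 1) = true)
    (hAmax : ∀ (x : 𝒳) (G : Finset H),
      (∀ h ∈ G,
        T x h (min (α * π h * ∑ i ∈ Finset.Icc 1 G.card, (i : ℝ) * γ i) 1) = true) →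
      G ⊆ A x) :
    (∫⁻ x, (if (A x).card = 0 then 0
        else ((A x ∩ H0).card : ℝ≥0∞) / ((A x).card : ℝ≥0∞)) ∂P)
        ≤ ENNReal.ofReal ((∑ h ∈ H0, π h) * α)
    ∧ ENNReal.ofReal ((∑ h ∈ H0, π h) * α) ≤ ENNReal.ofReal α := by
  -- basic positivity facts
  have hβnn : ∀ k : ℕ, (0:ℝ) ≤ ∑ i ∈ Finset.Icc 1 k, (i:ℝ) * γ i :=
    fun k => Finset.sum_nonneg fun i _ => mul_nonneg (by positivity) (hγnn i)
  have hβmono : ∀ k K : ℕ, k ≤ K → (∑ i ∈ Finset.Icc 1 k, (i:ℝ)*γ i)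
      ≤ ∑ i ∈ Finset.Icc 1 K, (i:ℝ)*γ i := fun k K hkK =>
    Finset.sum_le_sum_of_subset_of_nonneg (Finset.Icc_subset_Icc_right hkK)
      (fun i _ _ => mul_nonneg (by positivity) (hγnn i))
  have hπ0 : (0:ℝ) ≤ ∑ h ∈ H0, π h := Finset.sum_nonneg fun h _ => hπnn h
  have hπle1 : (∑ h ∈ H0, π h) ≤ 1 := hπsum ▸ Finset.sum_le_sum_of_subset_of_nonneg
    (Finset.subset_univ _) (fun h _ _ => hπnn h)
  refine ⟨?_, ENNReal.ofReal_le_ofReal (by nlinarith)⟩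
  -- membership characterization and measurability
  have hmem : ∀ (x : 𝒳) (h : H), h ∈ A x ↔ ∃ G : Finset H, h ∈ G ∧ ∀ h' ∈ G,
      T x h' (min (α * π h' * ∑ i ∈ Finset.Icc 1 G.card, (i:ℝ) * γ i) 1) = true := by
    intro x h
    exact ⟨fun hh => ⟨A x, hh, hAself x⟩, fun ⟨G, hhG, hG⟩ => hAmax x G hG hhG⟩
  have hmemMeas : ∀ h : H, MeasurableSet {x | h ∈ A x} := by
    intro h
    have heq : {x | h ∈ A x} = ⋃ G ∈ Finset.univ.filter (fun G : Finset H => h ∈ G),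
        ⋂ h' ∈ G, {x | T x h' (min (α * π h' * ∑ i ∈ Finset.Icc 1 G.card, (i:ℝ)*γ i) 1) = true} := by
      ext x
      simp only [Set.mem_setOf_eq, Set.mem_iUnion, Set.mem_iInter, Finset.mem_filter,
        Finset.mem_univ, true_and, hmem x h]
      tauto
    rw [heq]
    exact Finset.measurableSet_biUnion _ fun G _ =>
      Finset.measurableSet_biInter _ fun h' _ => hTmeas h' _
  have hSmeas : ∀ G : Finset H, MeasurableSet {x | A x = G} := by
    intro G
    have heq : {x | A x = G} = ⋂ h : H, {x | h ∈ A x ↔ h ∈ G} := by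
      ext x; simp [Finset.ext_iff, Set.mem_iInter]
    rw [heq]
    refine MeasurableSet.iInter fun h => ?_
    by_cases hhG : h ∈ G
    · have : {x | h ∈ A x ↔ h ∈ G} = {x | h ∈ A x} := by ext x; simp [hhG]
      rw [this]; exact hmemMeas h
    · have : {x | h ∈ A x ↔ h ∈ G} = {x | h ∈ A x}ᶜ := by ext x; simp [hhG]
      rw [this]; exact (hmemMeas h).compl
  -- the integral as a finite sum over the values of A
  have hLHS : (∫⁻ x, (if (A x).card = 0 then 0
        else ((A x ∩ H0).card : ℝ≥0∞) / ((A x).card : ℝ≥0∞)) ∂P)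
      = ∑ G : Finset H, (if G.card = 0 then 0 else ((G ∩ H0).card : ℝ≥0∞) / (G.card:ℝ≥0∞))
          * P {x | A x = G} := by
    have hfun : ∀ x, (if (A x).card = 0 then (0:ℝ≥0∞)
        else ((A x ∩ H0).card : ℝ≥0∞) / ((A x).card:ℝ≥0∞))
        = ∑ G : Finset H, Set.indicator {x' | A x' = G}
            (fun _ => if G.card = 0 then (0:ℝ≥0∞) else ((G ∩ H0).card:ℝ≥0∞)/(G.card:ℝ≥0∞)) x := by
      intro x
      rw [Finset.sum_eq_single (A x)]
      · rw [Set.indicator_of_mem (show x ∈ {x' | A x' = A x} from rfl)]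
      · intro G _ hne
        exact Set.indicator_of_notMem (fun hx => hne hx.symm) _
      · intro habs; exact absurd (Finset.mem_univ _) habs
    simp_rw [hfun]
    rw [lintegral_finset_sum _ (fun G _ => Measurable.indicator measurable_const (hSmeas G))]
    exact Finset.sum_congr rfl fun G _ => lintegral_indicator_const (hSmeas G) _
  rw [hLHS]
  -- rewrite each term as a sum over true nulls
  have hsplit : ∀ G : Finset H,
      (if G.card = 0 then 0 else ((G ∩ H0).card : ℝ≥0∞) / (G.card:ℝ≥0∞)) * P {x | A x = G}
      = ∑ h ∈ H0, (if h ∈ G then P {x | A x = G} * ((G.card:ℝ≥0∞))⁻¹ else 0) := by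
    intro G
    by_cases hG : G.card = 0
    · rw [Finset.card_eq_zero] at hG
      subst hG
      simp
    · rw [if_neg hG, Finset.sum_ite_mem]
      have hcard : (H0 ∩ G).card = (G ∩ H0).card := by rw [Finset.inter_comm]
      rw [Finset.sum_const, hcard, nsmul_eq_mul, div_eq_mul_inv]
      ring
  simp_rw [hsplit]
  rw [Finset.sum_comm]
  -- bound the contribution of each true null
  have hperh : ∀ h ∈ H0, (∑ G : Finset H,
      (if h ∈ G then P {x | A x = G} * ((G.card:ℝ≥0∞))⁻¹ else 0)) ≤ ENNReal.ofReal (α * π h) := by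
    intro h hh
    have hn1 : 1 ≤ Fintype.card H := Fintype.card_pos_iff.mpr ⟨h⟩
    set n := Fintype.card H with hn
    set q : ℕ → ℝ≥0∞ := fun k =>
      ∑ G ∈ Finset.univ.filter (fun G : Finset H => h ∈ G ∧ G.card = k), P {x | A x = G} with hqdef
    -- group the sum by cardinality
    have hgroup : (∑ G : Finset H, (if h ∈ G then P {x | A x = G} * ((G.card:ℝ≥0∞))⁻¹ else 0))
        = ∑ k ∈ Finset.Icc 1 n, q k * ((k:ℝ≥0∞))⁻¹ := by
      have hmap : ∀ G ∈ Finset.univ.filter (fun G : Finset H => h ∈ G),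
          G.card ∈ Finset.Icc 1 n := fun G hG => Finset.mem_Icc.mpr
        ⟨Finset.card_pos.mpr ⟨h, (Finset.mem_filter.mp hG).2⟩, Finset.card_le_univ G⟩
      rw [← Finset.sum_filter (fun G : Finset H => h ∈ G)
          (fun G => P {x | A x = G} * ((G.card:ℝ≥0∞))⁻¹),
        ← Finset.sum_fiberwise_of_maps_to hmap (fun G => P {x | A x = G} * ((G.card:ℝ≥0∞))⁻¹)]
      refine Finset.sum_congr rfl fun k hk => ?_
      rw [hqdef]
      simp only [Finset.filter_filter]
      rw [Finset.sum_mul]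
      exact Finset.sum_congr rfl fun G hG => by
        rw [(Finset.mem_filter.mp hG).2.2]
    rw [hgroup]
    -- partial sums of q are controlled by the test levels
    have hq : ∀ K, K ≤ n → ∑ k ∈ Finset.Icc 1 K, q k
        ≤ ENNReal.ofReal (α * π h * ∑ i ∈ Finset.Icc 1 K, (i:ℝ)*γ i) := by
      intro K hK
      have hstep : ∑ k ∈ Finset.Icc 1 K, q k
          = ∑ G ∈ Finset.univ.filter (fun G : Finset H => h ∈ G ∧ G.card ≤ K),
              P {x | A x = G} := by
        have hmap : ∀ G ∈ Finset.univ.filter (fun G : Finset H => h ∈ G ∧ G.card ≤ K),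
            G.card ∈ Finset.Icc 1 K := fun G hG => Finset.mem_Icc.mpr
          ⟨Finset.card_pos.mpr ⟨h, (Finset.mem_filter.mp hG).2.1⟩, (Finset.mem_filter.mp hG).2.2⟩
        rw [← Finset.sum_fiberwise_of_maps_to hmap (fun G => P {x | A x = G})]
        refine Finset.sum_congr rfl fun k hk => Finset.sum_congr ?_ fun _ _ => rfl
        have hkK : k ≤ K := (Finset.mem_Icc.mp hk).2
        rw [Finset.filter_filter]
        ext G
        simp only [Finset.mem_filter, Finset.mem_univ, true_and]
        constructor
        · rintro ⟨h1, h3⟩; exact ⟨⟨h1, h3 ▸ hkK⟩, h3⟩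
        · rintro ⟨⟨h1, h2⟩, h3⟩; exact ⟨h1, h3⟩
      rw [hstep]
      have hdisj : (↑(Finset.univ.filter (fun G : Finset H => h ∈ G ∧ G.card ≤ K)) :
          Set (Finset H)).PairwiseDisjoint (fun G => {x | A x = G}) := by
        intro G _ G' _ hne
        rw [Function.onFun, Set.disjoint_left]
        exact fun {x} hx hx' => hne (hx.symm.trans hx')
      rw [show (∑ G ∈ Finset.univ.filter (fun G : Finset H => h ∈ G ∧ G.card ≤ K),
          P {x | A x = G}) = P (⋃ G ∈ Finset.univ.filter
            (fun G : Finset H => h ∈ G ∧ G.card ≤ K), {x | A x = G}) from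
        (measure_biUnion_finset hdisj (fun G _ => hSmeas G)).symm]
      have hsub : (⋃ G ∈ Finset.univ.filter (fun G : Finset H => h ∈ G ∧ G.card ≤ K),
          {x | A x = G}) ⊆ {x | T x h
            (min (α * π h * ∑ i ∈ Finset.Icc 1 K, (i:ℝ)*γ i) 1) = true} := by
        intro x hx
        simp only [Set.mem_iUnion, Finset.mem_filter, Finset.mem_univ, true_and,
          Set.mem_setOf_eq] at hx
        obtain ⟨G, ⟨hhG, hcardK⟩, hAxG⟩ := hx
        have hhAx : h ∈ A x := by rw [hAxG]; exact hhG
        have h1 := hAself x h hhAx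
        refine hTmono x h _ _ ?_ h1
        refine min_le_min (mul_le_mul_of_nonneg_left (hβmono _ _ ?_)
          (mul_nonneg hα0 (hπnn h))) le_rfl
        rw [hAxG]; exact hcardK
      refine le_trans (measure_mono hsub) ?_
      refine le_trans (hlevel h hh _
        (le_min (mul_nonneg (mul_nonneg hα0 (hπnn h)) (hβnn K)) zero_le_one)
        (min_le_right _ _)) ?_
      exact ENNReal.ofReal_le_ofReal (min_le_left _ _)
    have hbound := stepup_sum_bound n hn1 q
      (fun K => α * π h * ∑ i ∈ Finset.Icc 1 K, (i:ℝ)*γ i)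
      (fun K => mul_nonneg (mul_nonneg hα0 (hπnn h)) (hβnn K)) hq
    refine hbound.trans (le_of_eq ?_)
    congr 1
    rw [beta_identity' γ (α * π h) n hn1, hγsum, mul_one]
  calc ∑ h ∈ H0, ∑ G : Finset H, (if h ∈ G then P {x | A x = G} * ((G.card:ℝ≥0∞))⁻¹ else 0)
      ≤ ∑ h ∈ H0, ENNReal.ofReal (α * π h) := Finset.sum_le_sum hperh
    _ = ENNReal.ofReal (∑ h ∈ H0, α * π h) :=
        (ENNReal.ofReal_sum_of_nonneg (fun h _ => mul_nonneg hα0 (hπnn h))).symm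
    _ = ENNReal.ofReal ((∑ h ∈ H0, π h) * α) := by
        congr 1
        rw [Finset.sum_mul]
        exact Finset.sum_congr rfl fun h _ => mul_comm _ _
end

section
/- Let ℋ be a finite set, T an increasing family of tests, π a probability distribution on ℋ, γ a probability distribution on {1,…,|ℋ|}, β(k) = Σ_{i≤k} i·γ(i), and α ∈ [0,1]. For fixed observation X, let 𝒢_X = { G ⊆ ℋ : for all h ∈ G, T(X, h, min(α·π(h)·β(|G|),1)) = 1 }. Then 𝒢_X is closed under unions: if G₁, G₂ ∈ 𝒢_X then G₁ ∪ G₂ ∈ 𝒢_X. Consequently 𝒢_X has a unique maximal element (the union of all its members), so the step-up procedure A_X = sup 𝒢_X is well defined. -/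
open scoped Classical

/-- **The step-up procedure is well defined.** For a fixed observation `X`, the collection
`𝒢_X` of sets `G ⊆ H` that are self-consistent for the level function
`(h, G) ↦ min(α·π(h)·β(|G|), 1)` (with `β(k) = Σ_{i ≤ k} i·γ(i)`, `T` an increasing family
of tests, `π` a prior on `H` and `γ` a prior on `{1,…,|H|}`) is closed under unions;
consequently it has a unique greatest element (the union of all its members), so the
step-up procedure `A_X = sup 𝒢_X` is well defined. -/
theorem stepup_collection_union_closed_and_greatest
    {𝒳 : Type*} {H : Type*} [Fintype H] [DecidableEq H]
    (α : ℝ) (hα0 : 0 ≤ α) (hα1 : α ≤ 1)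
    (T : 𝒳 → H → ℝ → Bool)
    (hTmono : ∀ (x : 𝒳) (h : H) (a a' : ℝ), a ≤ a' → T x h a = true → T x h a' = true)
    (hT0 : ∀ (x : 𝒳) (h : H), T x h 0 = false)
    (π : H → ℝ) (hπnn : ∀ h, 0 ≤ π h) (hπsum : ∑ h, π h = 1)
    (γ : ℕ → ℝ) (hγnn : ∀ i, 0 ≤ γ i)
    (hγsum : ∑ i ∈ Finset.Icc 1 (Fintype.card H), γ i = 1)
    (X : 𝒳) :
    (∀ G₁ G₂ : Finset H,
      (∀ h ∈ G₁,
        T X h (min (α * π h * ∑ i ∈ Finset.Icc 1 G₁.card, (i : ℝ) * γ i) 1) = true) →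
      (∀ h ∈ G₂,
        T X h (min (α * π h * ∑ i ∈ Finset.Icc 1 G₂.card, (i : ℝ) * γ i) 1) = true) →
      ∀ h ∈ G₁ ∪ G₂,
        T X h (min (α * π h * ∑ i ∈ Finset.Icc 1 (G₁ ∪ G₂).card, (i : ℝ) * γ i) 1) = true)
    ∧ ∃! M : Finset H,
        (∀ h ∈ M,
          T X h (min (α * π h * ∑ i ∈ Finset.Icc 1 M.card, (i : ℝ) * γ i) 1) = true)
        ∧ ∀ G : Finset H,
          (∀ h ∈ G,
            T X h (min (α * π h * ∑ i ∈ Finset.Icc 1 G.card, (i : ℝ) * γ i) 1) = true) →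
          G ⊆ M := by
  set P : Finset H → Prop := fun G =>
    ∀ h ∈ G, T X h (min (α * π h * ∑ i ∈ Finset.Icc 1 G.card, (i : ℝ) * γ i) 1) = true
    with hP
  -- β monotone
  have hβmono : ∀ {k l : ℕ}, k ≤ l →
      (∑ i ∈ Finset.Icc 1 k, (i : ℝ) * γ i) ≤ ∑ i ∈ Finset.Icc 1 l, (i : ℝ) * γ i := by
    intro k l hkl
    apply Finset.sum_le_sum_of_subset_of_nonneg
    · exact Finset.Icc_subset_Icc_right hkl
    · intro i _ _
      exact mul_nonneg (Nat.cast_nonneg i) (hγnn i)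
  have key : ∀ G G' : Finset H, G ⊆ G' → ∀ h ∈ G,
      T X h (min (α * π h * ∑ i ∈ Finset.Icc 1 G.card, (i : ℝ) * γ i) 1) = true →
      T X h (min (α * π h * ∑ i ∈ Finset.Icc 1 G'.card, (i : ℝ) * γ i) 1) = true := by
    intro G G' hsub h hh
    apply hTmono
    apply min_le_min_right
    exact mul_le_mul_of_nonneg_left (hβmono (Finset.card_le_card hsub))
      (mul_nonneg hα0 (hπnn h))
  have hunion : ∀ G₁ G₂ : Finset H, P G₁ → P G₂ → P (G₁ ∪ G₂) := by
    intro G₁ G₂ h1 h2 h hh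
    rcases Finset.mem_union.mp hh with hm | hm
    · exact key G₁ (G₁ ∪ G₂) Finset.subset_union_left h hm (h1 h hm)
    · exact key G₂ (G₁ ∪ G₂) Finset.subset_union_right h hm (h2 h hm)
  refine ⟨hunion, ?_⟩
  set S : Finset (Finset H) := Finset.univ.filter P with hS
  refine ⟨S.sup id, ⟨?_, ?_⟩, ?_⟩
  · have : P (S.sup id) := by
      apply Finset.sup_induction
      · intro h hh; exact absurd hh (Finset.notMem_empty h)
      · intro a ha b hb; exact hunion a b ha hb
      · intro G hG; exact (Finset.mem_filter.mp hG).2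
    exact this
  · intro G hG
    exact Finset.le_sup (f := id) (Finset.mem_filter.mpr ⟨Finset.mem_univ G, hG⟩)
  · rintro M ⟨hM, hMax⟩
    apply Finset.Subset.antisymm
    · exact Finset.le_sup (f := id) (Finset.mem_filter.mpr ⟨Finset.mem_univ M, hM⟩)
    · apply hMax
      show P (S.sup id)
      apply Finset.sup_induction
      · intro h hh; exact absurd hh (Finset.notMem_empty h)
      · intro a ha b hb; exact hunion a b ha hb
      · intro G hG; exact (Finset.mem_filter.mp hG).2
end

section
/- (Benjamini–Yekutieli procedure via Occam's hammer.) Let ℋ be a finite set of m null hypotheses, α ∈ [0,1], T an increasing family of tests, and ℋ₀ ⊆ ℋ the set of true nulls, so that P(T(X,h,a)=1) ≤ a for all h ∈ ℋ₀ and a ∈ [0,1]. Let κ = Σ_{i=1}^{m} 1/i. Define A_X = the largest set G ⊆ ℋ such that for all h ∈ G, T(X, h, min(α·|G|/(m·κ), 1)) = 1. Then E_{X~P}[ |A_X ∩ ℋ₀| / |A_X| ] ≤ α·|ℋ₀|/m ≤ α (with the ratio taken to be 0 when A_X = ∅), with no assumption on the dependence between the individual tests. -/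
open MeasureTheory
open scoped Classical ENNReal

lemma tele_sum_s14 (k m : ℕ) (hk : k ≤ m + 1) :
    ∑ i ∈ Finset.Icc k m, ((1:ℝ)/(i:ℝ) - 1/((i:ℝ)+1)) = 1/(k:ℝ) - 1/((m:ℝ)+1) := by
  have hIcc : Finset.Icc k m = Finset.Ico k (m+1) := by rw [Finset.Ico_add_one_right_eq_Icc]
  have h1 : ∀ n : ℕ, ∑ i ∈ Finset.range n, ((1:ℝ)/(i:ℝ) - 1/((i:ℝ)+1))
      = 1/((0:ℕ):ℝ) - 1/(n:ℝ) := by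
    intro n
    rw [← Finset.sum_range_sub' (fun i : ℕ => (1:ℝ)/(i:ℝ)) n]
    apply Finset.sum_congr rfl
    intro i _
    push_cast
    ring
  rw [hIcc, Finset.sum_Ico_eq_sub _ hk, h1, h1]
  push_cast
  ring

lemma shift_sum (m : ℕ) :
    ∑ i ∈ Finset.Icc 1 m, (1:ℝ)/((i:ℝ)+1)
      = (∑ i ∈ Finset.Icc 1 m, (1:ℝ)/(i:ℝ)) - (m:ℝ)/((m:ℝ)+1) := by
  induction m with
  | zero => simp
  | succ n ih =>
      rw [Finset.sum_Icc_succ_top (by omega), Finset.sum_Icc_succ_top (by omega), ih]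
      have h1 : (n:ℝ) + 1 ≠ 0 := by positivity
      have h2 : ((n:ℝ) + 1) + 1 ≠ 0 := by positivity
      push_cast
      field_simp
      ring

/-- **The Benjamini–Yekutieli step-up procedure, recovered via Occam's hammer.**
`H` is a finite pool of `m` null hypotheses, `T` an increasing family of tests, `H0` the
set of true nulls (each individual test having level `a`: `P(T(X,h,a)=1) ≤ a` for
`h ∈ H0`), and `κ = Σ_{i=1}^m 1/i`. The step-up procedure `A_X` — the largest `G ⊆ H`
with `T(X, h, min(α·|G|/(m·κ), 1)) = 1` for all `h ∈ G` — has false discovery rate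
`E_X[|A_X ∩ H0| / |A_X|] ≤ α·|H0|/m ≤ α` (ratio `0` when `A_X = ∅`), with no assumption
on the dependence between the individual tests. -/
theorem benjamini_yekutieli_FDR_control
    {𝒳 : Type*} [MeasurableSpace 𝒳] {H : Type*} [Fintype H] [DecidableEq H] [Nonempty H]
    (P : Measure 𝒳) [IsProbabilityMeasure P]
    (α : ℝ) (hα0 : 0 ≤ α) (hα1 : α ≤ 1)
    (T : 𝒳 → H → ℝ → Bool)
    (hTmeas : ∀ (h : H) (a : ℝ), MeasurableSet {x : 𝒳 | T x h a = true})
    (hTmono : ∀ (x : 𝒳) (h : H) (a a' : ℝ), a ≤ a' → T x h a = true → T x h a' = true)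
    (hT0 : ∀ (x : 𝒳) (h : H), T x h 0 = false)
    (H0 : Finset H)
    (hlevel : ∀ h ∈ H0, ∀ a : ℝ, 0 ≤ a → a ≤ 1 →
      P {x : 𝒳 | T x h a = true} ≤ ENNReal.ofReal a)
    (A : 𝒳 → Finset H)
    (hAself : ∀ x, ∀ h ∈ A x,
      T x h (min (α * ((A x).card : ℝ) /
        ((Fintype.card H : ℝ) * ∑ i ∈ Finset.Icc 1 (Fintype.card H), (1 : ℝ) / i)) 1)
        = true)
    (hAmax : ∀ (x : 𝒳) (G : Finset H),
      (∀ h ∈ G,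
        T x h (min (α * (G.card : ℝ) /
          ((Fintype.card H : ℝ) * ∑ i ∈ Finset.Icc 1 (Fintype.card H), (1 : ℝ) / i)) 1)
          = true) →
      G ⊆ A x) :
    (∫⁻ x, (if (A x).card = 0 then 0
        else ((A x ∩ H0).card : ℝ≥0∞) / ((A x).card : ℝ≥0∞)) ∂P)
        ≤ ENNReal.ofReal (α * (H0.card : ℝ) / (Fintype.card H : ℝ))
    ∧ ENNReal.ofReal (α * (H0.card : ℝ) / (Fintype.card H : ℝ)) ≤ ENNReal.ofReal α := by
  classical
  set m := Fintype.card H with hmdef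
  set κ : ℝ := ∑ i ∈ Finset.Icc 1 m, (1:ℝ)/i with hκdef
  have hm1 : 1 ≤ m := Fintype.card_pos
  have hmR : (0:ℝ) < (m:ℝ) := by exact_mod_cast hm1
  have hκ1 : (1:ℝ) ≤ κ := by
    rw [hκdef]
    have h1m : (1:ℕ) ∈ Finset.Icc 1 m := by simp [hm1]
    have := Finset.single_le_sum (f := fun i : ℕ => (1:ℝ)/i)
      (fun i _ => by positivity) h1m
    simpa using this
  have hκ0 : (0:ℝ) < κ := lt_of_lt_of_le one_pos hκ1
  have hC : (0:ℝ) < (m:ℝ) * κ := mul_pos hmR hκ0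
  set lvl : ℕ → ℝ := fun i => min (α * i / ((m:ℝ) * κ)) 1 with hlvldef
  have hlvl0 : ∀ i, 0 ≤ lvl i := fun i =>
    le_min (div_nonneg (mul_nonneg hα0 (Nat.cast_nonneg i)) hC.le) zero_le_one
  have hlvl1 : ∀ i, lvl i ≤ 1 := fun i => min_le_right _ _
  have hlvlmono : ∀ k i : ℕ, k ≤ i → lvl k ≤ lvl i := by
    intro k i hki
    apply min_le_min _ le_rfl
    gcongr
  set S : H → ℕ → Set 𝒳 := fun h i => {x | T x h (lvl i) = true} with hSdef
  have hSmeas : ∀ h i, MeasurableSet (S h i) := fun h i => hTmeas h (lvl i)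
  have hP : ∀ h ∈ H0, ∀ i : ℕ, P (S h i) ≤ ENNReal.ofReal (α * i / ((m:ℝ) * κ)) := by
    intro h hh i
    refine le_trans (hlevel h hh (lvl i) (hlvl0 i) (hlvl1 i)) ?_
    exact ENNReal.ofReal_le_ofReal (min_le_left _ _)
  set w : ℕ → ℝ≥0∞ := fun i => ENNReal.ofReal ((1:ℝ)/(i:ℝ) - 1/((i:ℝ)+1)) with hwdef
  set c : ℝ≥0∞ := ENNReal.ofReal ((1:ℝ)/((m:ℝ)+1)) with hcdef
  set g : H → 𝒳 → ℝ≥0∞ := fun h x =>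
    (∑ i ∈ Finset.Icc 1 m, (S h i).indicator (fun _ => w i) x)
      + (S h m).indicator (fun _ => c) x with hgdef
  -- pointwise bound
  have key : ∀ x, (if (A x).card = 0 then 0
      else ((A x ∩ H0).card : ℝ≥0∞) / ((A x).card : ℝ≥0∞))
      ≤ ∑ h ∈ H0, g h x := by
    intro x
    by_cases hA0 : (A x).card = 0
    · simp [hA0]
    · rw [if_neg hA0]
      have hk1 : 1 ≤ (A x).card := Nat.one_le_iff_ne_zero.mpr hA0
      have hkm : (A x).card ≤ m := by
        rw [hmdef]; exact Finset.card_le_univ (A x)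
      have hcardE : ((A x ∩ H0).card : ℝ≥0∞)
          = ∑ h ∈ H0, (if h ∈ A x then (1:ℝ≥0∞) else 0) := by
        rw [Finset.inter_comm, ← Finset.filter_mem_eq_inter, Finset.card_filter]
        push_cast
        rfl
      have hL : ((A x ∩ H0).card : ℝ≥0∞) / ((A x).card : ℝ≥0∞)
          = ∑ h ∈ H0, (if h ∈ A x then (((A x).card : ℝ≥0∞))⁻¹ else 0) := by
        rw [div_eq_mul_inv, hcardE, Finset.sum_mul]
        refine Finset.sum_congr rfl fun h _ => ?_
        split <;> simp
      rw [hL]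
      refine Finset.sum_le_sum fun h hh => ?_
      by_cases hhA : h ∈ A x
      · rw [if_pos hhA]
        have hmem : ∀ i, (A x).card ≤ i → x ∈ S h i := by
          intro i hki
          have h1 : T x h (lvl ((A x).card)) = true := by
            have := hAself x h hhA
            simpa [hlvldef] using this
          exact hTmono x h _ _ (hlvlmono _ i hki) h1
        have e1 : ∑ i ∈ Finset.Icc (A x).card m, w i
            = ∑ i ∈ Finset.Icc (A x).card m, (S h i).indicator (fun _ => w i) x :=
          Finset.sum_congr rfl fun i hi => by
            rw [Set.indicator_of_mem (hmem i (Finset.mem_Icc.mp hi).1)]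
        have e2 : c = (S h m).indicator (fun _ => c) x := by
          rw [Set.indicator_of_mem (hmem m hkm)]
        have hge : (∑ i ∈ Finset.Icc (A x).card m, w i) + c ≤ g h x := by
          rw [e1]
          conv_lhs => rw [e2]
          simp only [hgdef]
          gcongr
        refine le_trans ?_ hge
        have hsum : ∑ i ∈ Finset.Icc (A x).card m, w i
            = ENNReal.ofReal (1/((A x).card:ℝ) - 1/((m:ℝ)+1)) := by
          rw [hwdef, ← ENNReal.ofReal_sum_of_nonneg, tele_sum_s14 _ m (by omega)]
          intro i hi
          have hi1 : 1 ≤ i := le_trans hk1 (Finset.mem_Icc.mp hi).1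
          have hiR : (1:ℝ) ≤ (i:ℝ) := by exact_mod_cast hi1
          rw [sub_nonneg]
          apply one_div_le_one_div_of_le <;> linarith
        have hnn : (0:ℝ) ≤ 1/((A x).card:ℝ) - 1/((m:ℝ)+1) := by
          rw [sub_nonneg]
          apply one_div_le_one_div_of_le
          · exact_mod_cast hk1
          · push_cast; exact_mod_cast le_trans (Nat.cast_le.mpr hkm) (by linarith)
        rw [hsum, hcdef, ← ENNReal.ofReal_add hnn (by positivity)]
        have heq : 1/((A x).card:ℝ) - 1/((m:ℝ)+1) + 1/((m:ℝ)+1) = 1/((A x).card:ℝ) := by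
          ring
        rw [heq, one_div, ENNReal.ofReal_inv_of_pos (by exact_mod_cast hk1),
          ENNReal.ofReal_natCast]
      · rw [if_neg hhA]
        exact zero_le
  have hgmeas : ∀ h, Measurable (g h) := by
    intro h
    simp only [hgdef]
    apply Measurable.add
    · apply Finset.measurable_sum
      intro i _
      exact measurable_const.indicator (hSmeas h i)
    · exact measurable_const.indicator (hSmeas h m)
  -- integral of g h
  have hint : ∀ h ∈ H0, ∫⁻ x, g h x ∂P ≤ ENNReal.ofReal (α / (m:ℝ)) := by
    intro h hh
    simp only [hgdef]
    rw [lintegral_add_right _ (measurable_const.indicator (hSmeas h m)),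
        lintegral_finset_sum _ (fun i _ => measurable_const.indicator (hSmeas h i))]
    have e : ∀ i : ℕ, ∫⁻ x, (S h i).indicator (fun _ => w i) x ∂P = w i * P (S h i) :=
      fun i => lintegral_indicator_const (hSmeas h i) _
    simp only [e]
    rw [lintegral_indicator_const (hSmeas h m)]
    have hb : ∀ i ∈ Finset.Icc 1 m, w i * P (S h i)
        ≤ ENNReal.ofReal (((1:ℝ)/(i:ℝ) - 1/((i:ℝ)+1)) * (α * i / ((m:ℝ)*κ))) := by
      intro i hi
      have hi1 : 1 ≤ i := (Finset.mem_Icc.mp hi).1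
      have hiR : (1:ℝ) ≤ (i:ℝ) := by exact_mod_cast hi1
      have hnn : (0:ℝ) ≤ (1:ℝ)/(i:ℝ) - 1/((i:ℝ)+1) := by
        rw [sub_nonneg]; gcongr <;> linarith
      rw [ENNReal.ofReal_mul hnn]
      exact mul_le_mul_right (hP h hh i) _
    have hbl : c * P (S h m)
        ≤ ENNReal.ofReal ((1/((m:ℝ)+1)) * (α * m / ((m:ℝ)*κ))) := by
      rw [hcdef, ENNReal.ofReal_mul (by positivity)]
      exact mul_le_mul_right (hP h hh m) _
    calc (∑ i ∈ Finset.Icc 1 m, w i * P (S h i)) + c * P (S h m)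
        ≤ (∑ i ∈ Finset.Icc 1 m,
            ENNReal.ofReal (((1:ℝ)/(i:ℝ) - 1/((i:ℝ)+1)) * (α * i / ((m:ℝ)*κ))))
          + ENNReal.ofReal ((1/((m:ℝ)+1)) * (α * m / ((m:ℝ)*κ))) := by
          exact add_le_add (Finset.sum_le_sum hb) hbl
      _ = ENNReal.ofReal ((∑ i ∈ Finset.Icc 1 m,
            ((1:ℝ)/(i:ℝ) - 1/((i:ℝ)+1)) * (α * i / ((m:ℝ)*κ)))
          + (1/((m:ℝ)+1)) * (α * m / ((m:ℝ)*κ))) := by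
          rw [← ENNReal.ofReal_sum_of_nonneg, ← ENNReal.ofReal_add]
          · apply Finset.sum_nonneg
            intro i hi
            have hi1 : 1 ≤ i := (Finset.mem_Icc.mp hi).1
            have hiR : (1:ℝ) ≤ (i:ℝ) := by exact_mod_cast hi1
            apply mul_nonneg
            · rw [sub_nonneg]; gcongr <;> linarith
            · positivity
          · positivity
          · intro i hi
            have hi1 : 1 ≤ i := (Finset.mem_Icc.mp hi).1
            have hiR : (1:ℝ) ≤ (i:ℝ) := by exact_mod_cast hi1
            apply mul_nonneg
            · rw [sub_nonneg]; gcongr <;> linarith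
            · positivity
      _ = ENNReal.ofReal (α / (m:ℝ)) := by
          congr 1
          have hterm : ∀ i ∈ Finset.Icc 1 m,
              ((1:ℝ)/(i:ℝ) - 1/((i:ℝ)+1)) * (α * i / ((m:ℝ)*κ))
              = (α / ((m:ℝ)*κ)) * ((1:ℝ)/((i:ℝ)+1)) := by
            intro i hi
            have hi1 : 1 ≤ i := (Finset.mem_Icc.mp hi).1
            have hiR : (1:ℝ) ≤ (i:ℝ) := by exact_mod_cast hi1
            have hi0 : (i:ℝ) ≠ 0 := by linarith
            have hi0' : (i:ℝ) + 1 ≠ 0 := by linarith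
            field_simp
            ring
          rw [Finset.sum_congr rfl hterm, ← Finset.mul_sum, shift_sum, ← hκdef]
          have hm0 : (m:ℝ) ≠ 0 := ne_of_gt hmR
          have hm0' : (m:ℝ) + 1 ≠ 0 := by linarith
          have hκ0' : κ ≠ 0 := ne_of_gt hκ0
          field_simp
          ring
  constructor
  · calc (∫⁻ x, (if (A x).card = 0 then 0
        else ((A x ∩ H0).card : ℝ≥0∞) / ((A x).card : ℝ≥0∞)) ∂P)
        ≤ ∫⁻ x, ∑ h ∈ H0, g h x ∂P := lintegral_mono key
      _ = ∑ h ∈ H0, ∫⁻ x, g h x ∂P := lintegral_finset_sum _ (fun h _ => hgmeas h)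
      _ ≤ ∑ _h ∈ H0, ENNReal.ofReal (α / (m:ℝ)) := Finset.sum_le_sum hint
      _ = H0.card • ENNReal.ofReal (α / (m:ℝ)) := Finset.sum_const _
      _ = ENNReal.ofReal (α * (H0.card:ℝ) / (m:ℝ)) := by
          rw [nsmul_eq_mul, ← ENNReal.ofReal_natCast H0.card,
            ← ENNReal.ofReal_mul (Nat.cast_nonneg _)]
          congr 1
          ring
  · apply ENNReal.ofReal_le_ofReal
    rw [div_le_iff₀ hmR]
    have hcard : (H0.card:ℝ) ≤ (m:ℝ) := by
      rw [hmdef]; exact_mod_cast Finset.card_le_univ H0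
    nlinarith
end
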